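/- The boundary wavelet ψ¹ = 2φ¹_{(1,2k)} + φ¹_{(1,2k+1)} on Ω = (0,1)² (built from fine hat functions of V_{j+1} next to the left boundary, with zero boundary conditions) is orthogonal in the Dirichlet inner product to all coarse hat functions φʲ_{(m,n)} ∈ V_j, 1 ≤ m,n ≤ 2ʲ−1. -/

import Mathlib

noncomputable section
open MeasureTheory

/-- The unit square Ω = (0,1) × (0,1). -/
def Omg : Set (ℝ × ℝ) := Set.Ioo 0 1 ×ˢ Set.Ioo 0 1

/-- Partial derivative in the x-direction. -/
def pdx (f : (ℝ × ℝ) → ℝ) (x : ℝ × ℝ) : ℝ := fderiv ℝ f x (1, 0)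

/-- Partial derivative in the y-direction. -/
def pdy (f : (ℝ × ℝ) → ℝ) (x : ℝ × ℝ) : ℝ := fderiv ℝ f x (0, 1)

/-- The Dirichlet inner product ⟨u,v⟩ₛ = ∫_Ω ∇u·∇v. -/
def dirInner (u v : (ℝ × ℝ) → ℝ) : ℝ :=
  ∫ x in Omg, pdx u x * pdx v x + pdy u x * pdy v x

/-- The piecewise-linear hat function of mesh `h` centered at `p` on the
type-1 (three-direction) triangulation. -/
def hat (h : ℝ) (p x : ℝ × ℝ) : ℝ :=
  max 0 (1 - (max |x.1 - p.1| (max |x.2 - p.2| |(x.1 - p.1) - (x.2 - p.2)|)) / h)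

/-- The hat function φʲ_{(m,n)} at the vertex (m/2ʲ, n/2ʲ) of the type-1
triangulation of Ω of mesh 2^{-j} (vanishing on ∂Ω for interior vertices). -/
def hatL (j m n : ℕ) : (ℝ × ℝ) → ℝ :=
  hat ((2 : ℝ) ^ j)⁻¹ ((m : ℝ) / 2 ^ j, (n : ℝ) / 2 ^ j)

namespace Stmt10Aux
open scoped NNReal ENNReal

/-- derivative of a locally-affine function -/
lemma pd_affine {f : ℝ × ℝ → ℝ} {x : ℝ × ℝ} (a b c : ℝ) {s : Set (ℝ × ℝ)}
    (hs : IsOpen s) (hx : x ∈ s) (hf : ∀ y ∈ s, f y = a * y.1 + b * y.2 + c) :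
    pdx f x = a ∧ pdy f x = b := by
  have hev : f =ᶠ[nhds x] (fun y => a * y.1 + b * y.2 + c) :=
    Filter.eventuallyEq_of_mem (hs.mem_nhds hx) hf
  have hA : HasFDerivAt (fun y : ℝ × ℝ => a * y.1 + b * y.2 + c)
      (a • (ContinuousLinearMap.fst ℝ ℝ ℝ) + b • (ContinuousLinearMap.snd ℝ ℝ ℝ)) x := by
    have h1 : HasFDerivAt (fun y : ℝ × ℝ => y.1) (ContinuousLinearMap.fst ℝ ℝ ℝ) x :=
      hasFDerivAt_fst
    have h2 : HasFDerivAt (fun y : ℝ × ℝ => y.2) (ContinuousLinearMap.snd ℝ ℝ ℝ) x :=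
      hasFDerivAt_snd
    simpa using ((h1.const_mul a).add (h2.const_mul b)).add_const c
  have hfd : fderiv ℝ f x = a • (ContinuousLinearMap.fst ℝ ℝ ℝ)
      + b • (ContinuousLinearMap.snd ℝ ℝ ℝ) := by
    rw [hev.fderiv_eq, hA.fderiv]
  constructor <;> simp [pdx, pdy, hfd]

lemma hat_val_zero {h p1 p2 : ℝ} (hh : 0 < h) {y : ℝ × ℝ}
    (hM : h ≤ max |y.1 - p1| (max |y.2 - p2| |(y.1 - p1) - (y.2 - p2)|)) :
    hat h (p1, p2) y = 0 := by
  unfold hat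
  apply max_eq_left
  have : (1:ℝ) ≤ max |y.1 - (p1,p2).1| (max |y.2 - (p1,p2).2|
      |(y.1 - (p1,p2).1) - (y.2 - (p1,p2).2)|) / h := (one_le_div hh).2 hM
  linarith

lemma hat_zero_xge {h p1 p2 : ℝ} (hh : 0 < h) {y : ℝ × ℝ} (hx : h ≤ y.1 - p1) :
    hat h (p1, p2) y = 0 :=
  hat_val_zero hh (le_max_of_le_left (hx.trans (le_abs_self _)))

lemma hat_zero_xle {h p1 p2 : ℝ} (hh : 0 < h) {y : ℝ × ℝ} (hx : y.1 - p1 ≤ -h) :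
    hat h (p1, p2) y = 0 :=
  hat_val_zero hh (le_max_of_le_left ((by linarith [neg_le_abs (y.1 - p1)] : h ≤ |y.1 - p1|)))

lemma hat_zero_yge {h p1 p2 : ℝ} (hh : 0 < h) {y : ℝ × ℝ} (hx : h ≤ y.2 - p2) :
    hat h (p1, p2) y = 0 :=
  hat_val_zero hh (le_max_of_le_right (le_max_of_le_left (hx.trans (le_abs_self _))))

lemma hat_zero_yle {h p1 p2 : ℝ} (hh : 0 < h) {y : ℝ × ℝ} (hx : y.2 - p2 ≤ -h) :
    hat h (p1, p2) y = 0 :=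
  hat_val_zero hh (le_max_of_le_right (le_max_of_le_left
    (by linarith [neg_le_abs (y.2 - p2)] : h ≤ |y.2 - p2|)))

lemma hat_zero_dge {h p1 p2 : ℝ} (hh : 0 < h) {y : ℝ × ℝ}
    (hx : h ≤ (y.1 - p1) - (y.2 - p2)) : hat h (p1, p2) y = 0 :=
  hat_val_zero hh (le_max_of_le_right (le_max_of_le_right (hx.trans (le_abs_self _))))

lemma hat_zero_dle {h p1 p2 : ℝ} (hh : 0 < h) {y : ℝ × ℝ}
    (hx : (y.1 - p1) - (y.2 - p2) ≤ -h) : hat h (p1, p2) y = 0 :=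
  hat_val_zero hh (le_max_of_le_right (le_max_of_le_right
    (by linarith [neg_le_abs ((y.1 - p1) - (y.2 - p2))] : h ≤ |(y.1 - p1) - (y.2 - p2)|)))

lemma hat_val_pos {h p1 p2 : ℝ} (hh : 0 < h) {y : ℝ × ℝ} {M : ℝ}
    (hM : max |y.1 - p1| (max |y.2 - p2| |(y.1 - p1) - (y.2 - p2)|) = M) (hMh : M ≤ h) :
    hat h (p1, p2) y = 1 - M / h := by
  unfold hat
  have : max |y.1 - (p1,p2).1| (max |y.2 - (p1,p2).2|
      |(y.1 - (p1,p2).1) - (y.2 - (p1,p2).2)|) = M := hM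
  rw [this]
  exact max_eq_right (by rw [sub_nonneg]; exact (div_le_one hh).2 hMh)

lemma hat_val_E {h p1 p2 : ℝ} (hh : 0 < h) {y : ℝ × ℝ}
    (h1 : 0 ≤ y.2 - p2) (h2 : y.2 - p2 ≤ y.1 - p1) (h3 : y.1 - p1 ≤ h) :
    hat h (p1, p2) y = 1 - (y.1 - p1) / h := by
  refine hat_val_pos hh ?_ h3
  have e1 : |y.2 - p2| ≤ y.1 - p1 := abs_le.2 ⟨by linarith, h2⟩
  have e2 : |(y.1 - p1) - (y.2 - p2)| ≤ y.1 - p1 := abs_le.2 ⟨by linarith, by linarith⟩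
  rw [abs_of_nonneg (by linarith : (0:ℝ) ≤ y.1 - p1)]
  exact max_eq_left (max_le e1 e2)

lemma hat_val_N {h p1 p2 : ℝ} (hh : 0 < h) {y : ℝ × ℝ}
    (h1 : 0 ≤ y.1 - p1) (h2 : y.1 - p1 ≤ y.2 - p2) (h3 : y.2 - p2 ≤ h) :
    hat h (p1, p2) y = 1 - (y.2 - p2) / h := by
  refine hat_val_pos hh ?_ h3
  have e1 : |y.1 - p1| ≤ y.2 - p2 := abs_le.2 ⟨by linarith, h2⟩
  have e2 : |(y.1 - p1) - (y.2 - p2)| ≤ y.2 - p2 := abs_le.2 ⟨by linarith, by linarith⟩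
  rw [abs_of_nonneg (by linarith : (0:ℝ) ≤ y.2 - p2), max_eq_left e2, max_eq_right e1]

lemma hat_val_NW {h p1 p2 : ℝ} (hh : 0 < h) {y : ℝ × ℝ}
    (h1 : y.1 - p1 ≤ 0) (h2 : 0 ≤ y.2 - p2) (h3 : (y.2 - p2) - (y.1 - p1) ≤ h) :
    hat h (p1, p2) y = 1 - ((y.2 - p2) - (y.1 - p1)) / h := by
  refine hat_val_pos hh ?_ h3
  have e0 : |(y.1 - p1) - (y.2 - p2)| = (y.2 - p2) - (y.1 - p1) := by
    rw [abs_sub_comm]; exact abs_of_nonneg (by linarith)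
  have e1 : |y.1 - p1| ≤ (y.2 - p2) - (y.1 - p1) := abs_le.2 ⟨by linarith, by linarith⟩
  have e2 : |y.2 - p2| ≤ (y.2 - p2) - (y.1 - p1) := abs_le.2 ⟨by linarith, by linarith⟩
  rw [e0, max_eq_right e2, max_eq_right e1]

lemma hat_val_W {h p1 p2 : ℝ} (hh : 0 < h) {y : ℝ × ℝ}
    (h1 : y.1 - p1 ≤ y.2 - p2) (h2 : y.2 - p2 ≤ 0) (h3 : -h ≤ y.1 - p1) :
    hat h (p1, p2) y = 1 + (y.1 - p1) / h := by
  have hv : hat h (p1,p2) y = 1 - (-(y.1 - p1)) / h := by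
    refine hat_val_pos hh ?_ (by linarith)
    have e1 : |y.2 - p2| ≤ -(y.1 - p1) := abs_le.2 ⟨by linarith, by linarith⟩
    have e2 : |(y.1 - p1) - (y.2 - p2)| ≤ -(y.1 - p1) := abs_le.2 ⟨by linarith, by linarith⟩
    rw [abs_of_nonpos (by linarith : y.1 - p1 ≤ 0)]
    exact max_eq_left (max_le e1 e2)
  rw [hv]; ring

lemma hat_val_S {h p1 p2 : ℝ} (hh : 0 < h) {y : ℝ × ℝ}
    (h1 : y.2 - p2 ≤ y.1 - p1) (h2 : y.1 - p1 ≤ 0) (h3 : -h ≤ y.2 - p2) :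
    hat h (p1, p2) y = 1 + (y.2 - p2) / h := by
  have hv : hat h (p1,p2) y = 1 - (-(y.2 - p2)) / h := by
    refine hat_val_pos hh ?_ (by linarith)
    have e1 : |y.1 - p1| ≤ -(y.2 - p2) := abs_le.2 ⟨by linarith, by linarith⟩
    have e2 : |(y.1 - p1) - (y.2 - p2)| ≤ -(y.2 - p2) := abs_le.2 ⟨by linarith, by linarith⟩
    rw [abs_of_nonpos (by linarith : y.2 - p2 ≤ 0)]
    rw [max_eq_left e2, max_eq_right e1]
  rw [hv]; ring

lemma hat_val_SE {h p1 p2 : ℝ} (hh : 0 < h) {y : ℝ × ℝ}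
    (h1 : y.2 - p2 ≤ 0) (h2 : 0 ≤ y.1 - p1) (h3 : (y.1 - p1) - (y.2 - p2) ≤ h) :
    hat h (p1, p2) y = 1 - ((y.1 - p1) - (y.2 - p2)) / h := by
  refine hat_val_pos hh ?_ h3
  have e0 : |(y.1 - p1) - (y.2 - p2)| = (y.1 - p1) - (y.2 - p2) := abs_of_nonneg (by linarith)
  have e1 : |y.1 - p1| ≤ (y.1 - p1) - (y.2 - p2) := abs_le.2 ⟨by linarith, by linarith⟩
  have e2 : |y.2 - p2| ≤ (y.1 - p1) - (y.2 - p2) := abs_le.2 ⟨by linarith, by linarith⟩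
  rw [e0, max_eq_right e2, max_eq_right e1]


def tri (a b c u e v : ℝ) : Set (ℝ × ℝ) :=
  {p : ℝ × ℝ | a < p.1 ∧ p.1 < b ∧ c + u * p.1 < p.2 ∧ p.2 < e + v * p.1}

lemma isOpen_tri (a b c u e v : ℝ) : IsOpen (tri a b c u e v) := by
  unfold tri
  simp only [Set.setOf_and]
  have c0 : Continuous fun p : ℝ × ℝ => a := continuous_const
  have cb : Continuous fun p : ℝ × ℝ => b := continuous_const
  have c1 : Continuous fun p : ℝ × ℝ => p.1 := continuous_fst
  have c2 : Continuous fun p : ℝ × ℝ => p.2 := continuous_snd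
  have c3 : Continuous fun p : ℝ × ℝ => c + u * p.1 := by fun_prop
  have c4 : Continuous fun p : ℝ × ℝ => e + v * p.1 := by fun_prop
  exact (isOpen_lt c0 c1).inter ((isOpen_lt c1 cb).inter
    ((isOpen_lt c3 c2).inter (isOpen_lt c2 c4)))

lemma measurableSet_tri (a b c u e v : ℝ) : MeasurableSet (tri a b c u e v) :=
  (isOpen_tri a b c u e v).measurableSet

lemma volume_tri {a b c u e v : ℝ} (hab : a ≤ b)
    (h : ∀ x, a ≤ x → x ≤ b → c + u * x ≤ e + v * x) :
    volume (tri a b c u e v) =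
      ENNReal.ofReal ((e - c) * (b - a) + (v - u) * (b ^ 2 - a ^ 2) / 2) := by
  have hre : tri a b c u e v =
      regionBetween (fun x => c + u * x) (fun x => e + v * x) (Set.Ioo a b) := by
    ext p
    simp [tri, regionBetween, Set.mem_Ioo, and_assoc]
  have hint1 : IntegrableOn (fun x => c + u * x) (Set.Ioo a b) volume :=
    (intervalIntegrable_iff_integrableOn_Ioo_of_le hab).1
      ((by fun_prop : Continuous fun x : ℝ => c + u * x).intervalIntegrable a b)
  have hint2 : IntegrableOn (fun x => e + v * x) (Set.Ioo a b) volume :=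
    (intervalIntegrable_iff_integrableOn_Ioo_of_le hab).1
      ((by fun_prop : Continuous fun x : ℝ => e + v * x).intervalIntegrable a b)
  rw [hre]
  show ((volume : Measure ℝ).prod volume) _ = _
  rw [volume_regionBetween_eq_integral hint1 hint2 measurableSet_Ioo
      (fun x hx => h x hx.1.le hx.2.le)]
  congr 1
  have : ∀ x, ((fun x => e + v * x) - fun x => c + u * x) x = (e - c) + (v - u) * x := by
    intro x; simp [Pi.sub_apply]; ring
  rw [show (∫ y in Set.Ioo a b, ((fun x => e + v * x) - fun x => c + u * x) y) =
      ∫ y in Set.Ioo a b, ((e - c) + (v - u) * y) from integral_congr_ae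
      (Filter.Eventually.of_forall (fun x => this x))]
  rw [← MeasureTheory.integral_Ioc_eq_integral_Ioo, ← intervalIntegral.integral_of_le hab]
  rw [intervalIntegral.integral_add (intervalIntegrable_const)
    ((intervalIntegral.intervalIntegrable_id).const_mul _),
    intervalIntegral.integral_const, intervalIntegral.integral_const_mul, integral_id]
  simp [smul_eq_mul]
  ring

lemma null_v (c : ℝ) : volume {p : ℝ × ℝ | p.1 = c} = 0 := by
  have : {p : ℝ × ℝ | p.1 = c} = ({c} : Set ℝ) ×ˢ (Set.univ : Set ℝ) := by
    ext ⟨x,y⟩; simp [eq_comm]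
  rw [this]
  show ((volume : Measure ℝ).prod volume) _ = _
  rw [Measure.prod_prod]
  simp

lemma null_h (c : ℝ) : volume {p : ℝ × ℝ | p.2 = c} = 0 := by
  have : {p : ℝ × ℝ | p.2 = c} = (Set.univ : Set ℝ) ×ˢ ({c} : Set ℝ) := by
    ext ⟨x,y⟩; simp [eq_comm]
  rw [this]
  show ((volume : Measure ℝ).prod volume) _ = _
  rw [Measure.prod_prod]
  simp

lemma null_d (c : ℝ) : volume {p : ℝ × ℝ | p.1 - p.2 = c} = 0 := by
  have hm : MeasurableSet {p : ℝ × ℝ | p.1 - p.2 = c} :=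
    (isClosed_eq (continuous_fst.sub continuous_snd) continuous_const).measurableSet
  show ((volume : Measure ℝ).prod volume) _ = _
  rw [Measure.prod_apply hm]
  have : ∀ x : ℝ, volume (Prod.mk x ⁻¹' {p : ℝ × ℝ | p.1 - p.2 = c}) = 0 := by
    intro x
    have : (Prod.mk x ⁻¹' {p : ℝ × ℝ | p.1 - p.2 = c}) = {x - c} := by
      ext y; simp; constructor <;> intro hy <;> linarith
    rw [this]; simp
  calc ∫⁻ (x : ℝ), volume (Prod.mk x ⁻¹' {p : ℝ × ℝ | p.1 - p.2 = c}) ∂volume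
      = ∫⁻ (_ : ℝ), 0 ∂volume := by simp only [this]
    _ = 0 := lintegral_zero


lemma lip_hat {h : ℝ} (hh : 0 < h) (p : ℝ × ℝ) :
    LipschitzWith (Real.toNNReal (2 / h)) (hat h p) := by
  apply LipschitzWith.of_dist_le_mul
  intro x y
  rw [Real.coe_toNNReal _ (by positivity)]
  rw [Real.dist_eq]
  set Mx := max |x.1 - p.1| (max |x.2 - p.2| |(x.1 - p.1) - (x.2 - p.2)|) with hMx
  set My := max |y.1 - p.1| (max |y.2 - p.2| |(y.1 - p.1) - (y.2 - p.2)|) with hMy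
  have hd1 : |x.1 - y.1| ≤ dist x y := by
    rw [Prod.dist_eq]; exact le_max_of_le_left (le_of_eq (Real.dist_eq _ _).symm)
  have hd2 : |x.2 - y.2| ≤ dist x y := by
    rw [Prod.dist_eq]; exact le_max_of_le_right (le_of_eq (Real.dist_eq _ _).symm)
  have hd0 : (0:ℝ) ≤ dist x y := dist_nonneg
  have key : |Mx - My| ≤ 2 * dist x y := by
    have k1 : abs (|x.1 - p.1| - |y.1 - p.1|) ≤ |x.1 - y.1| := by
      refine le_trans (abs_abs_sub_abs_le_abs_sub _ _) (le_of_eq ?_)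
      congr 1; ring
    have k2 : abs (|x.2 - p.2| - |y.2 - p.2|) ≤ |x.2 - y.2| := by
      refine le_trans (abs_abs_sub_abs_le_abs_sub _ _) (le_of_eq ?_)
      congr 1; ring
    have k3 : abs (|(x.1 - p.1) - (x.2 - p.2)| - |(y.1 - p.1) - (y.2 - p.2)|)
        ≤ |x.1 - y.1| + |x.2 - y.2| := by
      refine le_trans (abs_abs_sub_abs_le_abs_sub _ _) ?_
      have : (x.1 - p.1) - (x.2 - p.2) - ((y.1 - p.1) - (y.2 - p.2))
          = (x.1 - y.1) - (x.2 - y.2) := by ring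
      rw [this]; exact abs_sub _ _
    calc |Mx - My| ≤ max (abs (|x.1 - p.1| - |y.1 - p.1|))
          (max (abs (|x.2 - p.2| - |y.2 - p.2|))
            (abs (|(x.1 - p.1) - (x.2 - p.2)| - |(y.1 - p.1) - (y.2 - p.2)|))) := by
          refine le_trans (abs_max_sub_max_le_max _ _ _ _) ?_
          exact max_le_max le_rfl (abs_max_sub_max_le_max _ _ _ _)
      _ ≤ 2 * dist x y := by
          apply max_le (by linarith)
          apply max_le (by linarith)
          calc _ ≤ |x.1 - y.1| + |x.2 - y.2| := k3
            _ ≤ 2 * dist x y := by linarith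
  have habs : |hat h p x - hat h p y| ≤ |Mx - My| / h := by
    unfold hat
    rw [max_comm 0 _, max_comm 0 _]
    refine le_trans (abs_max_sub_max_le_abs _ _ _) ?_
    rw [show (1 - Mx / h) - (1 - My / h) = (My - Mx)/h by ring, abs_div,
      abs_of_pos hh, abs_sub_comm]
  calc |hat h p x - hat h p y| ≤ |Mx - My| / h := habs
    _ ≤ (2 * dist x y) / h := by gcongr
    _ = 2 / h * dist x y := by ring

lemma lip_psi {d q : ℝ} (hd : 0 < d) :
    LipschitzWith (Real.toNNReal (6 / d))
      (fun x => 2 * hat d (d, q) x + hat d (d, q + d) x) := by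
  apply LipschitzWith.of_dist_le_mul
  intro x y
  have l1 := (lip_hat hd (d, q)).dist_le_mul x y
  have l2 := (lip_hat hd (d, q + d)).dist_le_mul x y
  rw [Real.coe_toNNReal _ (by positivity)] at l1 l2
  rw [Real.coe_toNNReal _ (by positivity)]
  rw [Real.dist_eq] at l1 l2 ⊢
  have e : 2 * hat d (d, q) x + hat d (d, q + d) x - (2 * hat d (d, q) y + hat d (d, q + d) y)
      = 2 * (hat d (d, q) x - hat d (d, q) y) + (hat d (d, q + d) x - hat d (d, q + d) y) := by
    ring
  rw [e]
  calc |2 * (hat d (d, q) x - hat d (d, q) y) + (hat d (d, q + d) x - hat d (d, q + d) y)|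
      ≤ |2 * (hat d (d, q) x - hat d (d, q) y)| + |hat d (d, q + d) x - hat d (d, q + d) y| :=
        abs_add_le _ _
    _ ≤ 2 * (2 / d * dist x y) + 2 / d * dist x y := by
        rw [abs_mul, abs_two]
        have hnn : (0:ℝ) ≤ 2 := by norm_num
        exact add_le_add (mul_le_mul_of_nonneg_left l1 hnn) l2
    _ = 6 / d * dist x y := by ring


lemma pd_bound {f : ℝ × ℝ → ℝ} {K : ℝ≥0} (hf : LipschitzWith K f) (x : ℝ × ℝ) :
    |pdx f x| ≤ K ∧ |pdy f x| ≤ K := by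
  have hn := norm_fderiv_le_of_lipschitz ℝ hf (x₀ := x)
  constructor
  · calc |pdx f x| = ‖fderiv ℝ f x (1, 0)‖ := rfl
      _ ≤ ‖fderiv ℝ f x‖ * ‖((1 : ℝ), (0 : ℝ))‖ := ContinuousLinearMap.le_opNorm _ _
      _ ≤ K * 1 := by
          apply mul_le_mul hn ?_ (norm_nonneg _) K.coe_nonneg
          rw [Prod.norm_def]; norm_num
      _ = K := mul_one _
  · calc |pdy f x| = ‖fderiv ℝ f x (0, 1)‖ := rfl
      _ ≤ ‖fderiv ℝ f x‖ * ‖((0 : ℝ), (1 : ℝ))‖ := ContinuousLinearMap.le_opNorm _ _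
      _ ≤ K * 1 := by
          apply mul_le_mul hn ?_ (norm_nonneg _) K.coe_nonneg
          rw [Prod.norm_def]; norm_num
      _ = K := mul_one _

lemma volume_Omg : volume Omg = 1 := by
  rw [Omg]
  show ((volume : Measure ℝ).prod volume) _ = _
  rw [Measure.prod_prod]
  simp

lemma integrableG {f g : ℝ × ℝ → ℝ} {Kf Kg : ℝ≥0}
    (hf : LipschitzWith Kf f) (hg : LipschitzWith Kg g) :
    IntegrableOn (fun p => pdx f p * pdx g p + pdy f p * pdy g p) Omg := by
  have hmeas : Measurable fun p => pdx f p * pdx g p + pdy f p * pdy g p := by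
    exact ((measurable_fderiv_apply_const ℝ f ((1:ℝ),(0:ℝ))).mul
      (measurable_fderiv_apply_const ℝ g ((1:ℝ),(0:ℝ)))).add
      ((measurable_fderiv_apply_const ℝ f ((0:ℝ),(1:ℝ))).mul
      (measurable_fderiv_apply_const ℝ g ((0:ℝ),(1:ℝ))))
  haveI : IsFiniteMeasure (volume.restrict Omg) := by
    constructor
    rw [Measure.restrict_apply_univ, volume_Omg]
    exact ENNReal.one_lt_top
  refine Integrable.mono' (integrable_const ((Kf : ℝ) * Kg + Kf * Kg))
    hmeas.aestronglyMeasurable (Filter.Eventually.of_forall fun x => ?_)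
  have h1 := pd_bound hf x
  have h2 := pd_bound hg x
  have e1 : |pdx f x * pdx g x| ≤ (Kf : ℝ) * Kg := by
    rw [abs_mul]
    exact mul_le_mul h1.1 h2.1 (abs_nonneg _) Kf.coe_nonneg
  have e2 : |pdy f x * pdy g x| ≤ (Kf : ℝ) * Kg := by
    rw [abs_mul]
    exact mul_le_mul h1.2 h2.2 (abs_nonneg _) Kf.coe_nonneg
  calc ‖pdx f x * pdx g x + pdy f x * pdy g x‖
      ≤ |pdx f x * pdx g x| + |pdy f x * pdy g x| := abs_add_le _ _
    _ ≤ (Kf : ℝ) * Kg + Kf * Kg := add_le_add e1 e2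

lemma peel {G : (ℝ × ℝ) → ℝ} {S T : Set (ℝ × ℝ)} {c v : ℝ}
    (hG : IntegrableOn G S) (hT : MeasurableSet T) (hTS : T ⊆ S)
    (hval : ∀ x ∈ T, G x = c) (hvol : volume T = ENNReal.ofReal v) (hv : 0 ≤ v) :
    ∫ x in S, G x = c * v + ∫ x in S \ T, G x := by
  rw [← MeasureTheory.integral_inter_add_diff hT hG, Set.inter_eq_right.mpr hTS]
  congr 1
  rw [setIntegral_congr_fun hT hval, setIntegral_const, measureReal_def, hvol, ENNReal.toReal_ofReal hv,
    smul_eq_mul, mul_comm]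

lemma M_ne {h p1 p2 : ℝ} (hh : 0 < h) {x : ℝ × ℝ}
    (e1 : x.1 ≠ p1 + h) (e2 : x.1 ≠ p1 - h) (e3 : x.2 ≠ p2 + h) (e4 : x.2 ≠ p2 - h)
    (e5 : x.1 - x.2 ≠ p1 - p2 + h) (e6 : x.1 - x.2 ≠ p1 - p2 - h) :
    max |x.1 - p1| (max |x.2 - p2| |(x.1 - p1) - (x.2 - p2)|) ≠ h := by
  intro hM
  rcases max_choice |x.1 - p1| (max |x.2 - p2| |(x.1 - p1) - (x.2 - p2)|) with h1 | h1 <;>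
    rw [h1] at hM
  · rcases (abs_eq hh.le).1 hM with h2 | h2
    · exact e1 (by linarith)
    · exact e2 (by linarith)
  · rcases max_choice |x.2 - p2| |(x.1 - p1) - (x.2 - p2)| with h3 | h3 <;> rw [h3] at hM
    · rcases (abs_eq hh.le).1 hM with h2 | h2
      · exact e3 (by linarith)
      · exact e4 (by linarith)
    · rcases (abs_eq hh.le).1 hM with h2 | h2
      · exact e5 (by linarith)
      · exact e6 (by linarith)

lemma isOpen_out (h p1 p2 : ℝ) :
    IsOpen {y : ℝ × ℝ | h < max |y.1 - p1| (max |y.2 - p2| |(y.1 - p1) - (y.2 - p2)|)} := by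
  apply isOpen_lt (continuous_const : Continuous fun _ : ℝ × ℝ => h)
  fun_prop

lemma pd_hat_out {h p1 p2 : ℝ} (hh : 0 < h) {x : ℝ × ℝ}
    (hx : h < max |x.1 - p1| (max |x.2 - p2| |(x.1 - p1) - (x.2 - p2)|)) :
    pdx (hat h (p1, p2)) x = 0 ∧ pdy (hat h (p1, p2)) x = 0 := by
  have := pd_affine (f := hat h (p1, p2)) 0 0 0 (isOpen_out h p1 p2) hx
    (fun y hy => by rw [hat_val_zero hh (le_of_lt hy)]; ring)
  simpa using this

lemma pd_psi_out {d q : ℝ} (hd : 0 < d) {x : ℝ × ℝ}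
    (hA : d < max |x.1 - d| (max |x.2 - q| |(x.1 - d) - (x.2 - q)|))
    (hB : d < max |x.1 - d| (max |x.2 - (q + d)| |(x.1 - d) - (x.2 - (q + d))|)) :
    pdx (fun y => 2 * hat d (d, q) y + hat d (d, q + d) y) x = 0 ∧
    pdy (fun y => 2 * hat d (d, q) y + hat d (d, q + d) y) x = 0 := by
  have := pd_affine (f := fun y => 2 * hat d (d, q) y + hat d (d, q + d) y) 0 0 0
    ((isOpen_out d d q).inter (isOpen_out d d (q + d)))
    (Set.mem_inter hA hB)
    (fun y hy => by
      show 2 * hat d (d, q) y + hat d (d, q + d) y = _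
      rw [hat_val_zero hd (le_of_lt hy.1), hat_val_zero hd (le_of_lt hy.2)]; ring)
  simpa using this

lemma pd_psi_1 {d q : ℝ} (hd : 0 < d) {x : ℝ × ℝ} (hx : x ∈ tri (d) (2*d) (q) (0) (q-d) (1)) :
    pdx (fun y => 2 * hat d (d, q) y + hat d (d, q + d) y) x = -2/d ∧
    pdy (fun y => 2 * hat d (d, q) y + hat d (d, q + d) y) x = 0 := by
  refine pd_affine (-2/d) (0) (4) (isOpen_tri _ _ _ _ _ _) hx (fun y hy => ?_)
  simp only [tri, Set.mem_setOf_eq] at hy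
  obtain ⟨g1, g2, g3, g4⟩ := hy
  show 2 * hat d (d, q) y + hat d (d, q + d) y = _
  rw [hat_val_E hd (by linarith) (by linarith) (by linarith), hat_zero_dge hd (by linarith)]
  field_simp
  try ring

lemma pd_psi_2 {d q : ℝ} (hd : 0 < d) {x : ℝ × ℝ} (hx : x ∈ tri (d) (2*d) (q-d) (1) (q+d) (0)) :
    pdx (fun y => 2 * hat d (d, q) y + hat d (d, q + d) y) x = -1/d ∧
    pdy (fun y => 2 * hat d (d, q) y + hat d (d, q + d) y) x = -1/d := by
  refine pd_affine (-1/d) (-1/d) (3 + q/d) (isOpen_tri _ _ _ _ _ _) hx (fun y hy => ?_)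
  simp only [tri, Set.mem_setOf_eq] at hy
  obtain ⟨g1, g2, g3, g4⟩ := hy
  show 2 * hat d (d, q) y + hat d (d, q + d) y = _
  rw [hat_val_N hd (by linarith) (by linarith) (by linarith), hat_val_SE hd (by linarith) (by linarith) (by linarith)]
  field_simp
  try ring

lemma pd_psi_3 {d q : ℝ} (hd : 0 < d) {x : ℝ × ℝ} (hx : x ∈ tri (0) (d) (q) (0) (q) (1)) :
    pdx (fun y => 2 * hat d (d, q) y + hat d (d, q + d) y) x = 2/d ∧
    pdy (fun y => 2 * hat d (d, q) y + hat d (d, q + d) y) x = -1/d := by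
  refine pd_affine (2/d) (-1/d) (q/d) (isOpen_tri _ _ _ _ _ _) hx (fun y hy => ?_)
  simp only [tri, Set.mem_setOf_eq] at hy
  obtain ⟨g1, g2, g3, g4⟩ := hy
  show 2 * hat d (d, q) y + hat d (d, q + d) y = _
  rw [hat_val_NW hd (by linarith) (by linarith) (by linarith), hat_val_S hd (by linarith) (by linarith) (by linarith)]
  field_simp
  try ring

lemma pd_psi_4 {d q : ℝ} (hd : 0 < d) {x : ℝ × ℝ} (hx : x ∈ tri (0) (d) (q-d) (1) (q) (0)) :
    pdx (fun y => 2 * hat d (d, q) y + hat d (d, q + d) y) x = 2/d ∧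
    pdy (fun y => 2 * hat d (d, q) y + hat d (d, q + d) y) x = 0 := by
  refine pd_affine (2/d) (0) (0) (isOpen_tri _ _ _ _ _ _) hx (fun y hy => ?_)
  simp only [tri, Set.mem_setOf_eq] at hy
  obtain ⟨g1, g2, g3, g4⟩ := hy
  show 2 * hat d (d, q) y + hat d (d, q + d) y = _
  rw [hat_val_W hd (by linarith) (by linarith) (by linarith), hat_zero_yle hd (by linarith)]
  field_simp
  try ring

lemma pd_psi_5 {d q : ℝ} (hd : 0 < d) {x : ℝ × ℝ} (hx : x ∈ tri (0) (d) (q-d) (0) (q-d) (1)) :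
    pdx (fun y => 2 * hat d (d, q) y + hat d (d, q + d) y) x = 0 ∧
    pdy (fun y => 2 * hat d (d, q) y + hat d (d, q + d) y) x = 2/d := by
  refine pd_affine (0) (2/d) (2 - 2*q/d) (isOpen_tri _ _ _ _ _ _) hx (fun y hy => ?_)
  simp only [tri, Set.mem_setOf_eq] at hy
  obtain ⟨g1, g2, g3, g4⟩ := hy
  show 2 * hat d (d, q) y + hat d (d, q + d) y = _
  rw [hat_val_S hd (by linarith) (by linarith) (by linarith), hat_zero_yle hd (by linarith)]
  field_simp
  try ring

lemma pd_psi_6 {d q : ℝ} (hd : 0 < d) {x : ℝ × ℝ} (hx : x ∈ tri (d) (2*d) (q-2*d) (1) (q) (0)) :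
    pdx (fun y => 2 * hat d (d, q) y + hat d (d, q + d) y) x = -2/d ∧
    pdy (fun y => 2 * hat d (d, q) y + hat d (d, q + d) y) x = 2/d := by
  refine pd_affine (-2/d) (2/d) (4 - 2*q/d) (isOpen_tri _ _ _ _ _ _) hx (fun y hy => ?_)
  simp only [tri, Set.mem_setOf_eq] at hy
  obtain ⟨g1, g2, g3, g4⟩ := hy
  show 2 * hat d (d, q) y + hat d (d, q + d) y = _
  rw [hat_val_SE hd (by linarith) (by linarith) (by linarith), hat_zero_dge hd (by linarith)]
  field_simp
  try ring

lemma pd_psi_7 {d q : ℝ} (hd : 0 < d) {x : ℝ × ℝ} (hx : x ∈ tri (d) (2*d) (q+d) (0) (q) (1)) :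
    pdx (fun y => 2 * hat d (d, q) y + hat d (d, q + d) y) x = -1/d ∧
    pdy (fun y => 2 * hat d (d, q) y + hat d (d, q + d) y) x = 0 := by
  refine pd_affine (-1/d) (0) (2) (isOpen_tri _ _ _ _ _ _) hx (fun y hy => ?_)
  simp only [tri, Set.mem_setOf_eq] at hy
  obtain ⟨g1, g2, g3, g4⟩ := hy
  show 2 * hat d (d, q) y + hat d (d, q + d) y = _
  rw [hat_zero_yge hd (by linarith), hat_val_E hd (by linarith) (by linarith) (by linarith)]
  field_simp
  try ring

lemma pd_psi_8 {d q : ℝ} (hd : 0 < d) {x : ℝ × ℝ} (hx : x ∈ tri (d) (2*d) (q) (1) (q+2*d) (0)) :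
    pdx (fun y => 2 * hat d (d, q) y + hat d (d, q + d) y) x = 0 ∧
    pdy (fun y => 2 * hat d (d, q) y + hat d (d, q + d) y) x = -1/d := by
  refine pd_affine (0) (-1/d) (2 + q/d) (isOpen_tri _ _ _ _ _ _) hx (fun y hy => ?_)
  simp only [tri, Set.mem_setOf_eq] at hy
  obtain ⟨g1, g2, g3, g4⟩ := hy
  show 2 * hat d (d, q) y + hat d (d, q + d) y = _
  rw [hat_zero_yge hd (by linarith), hat_val_N hd (by linarith) (by linarith) (by linarith)]
  field_simp
  try ring

lemma pd_psi_9 {d q : ℝ} (hd : 0 < d) {x : ℝ × ℝ} (hx : x ∈ tri (0) (d) (q+d) (0) (q+d) (1)) :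
    pdx (fun y => 2 * hat d (d, q) y + hat d (d, q + d) y) x = 1/d ∧
    pdy (fun y => 2 * hat d (d, q) y + hat d (d, q + d) y) x = -1/d := by
  refine pd_affine (1/d) (-1/d) (1 + q/d) (isOpen_tri _ _ _ _ _ _) hx (fun y hy => ?_)
  simp only [tri, Set.mem_setOf_eq] at hy
  obtain ⟨g1, g2, g3, g4⟩ := hy
  show 2 * hat d (d, q) y + hat d (d, q + d) y = _
  rw [hat_zero_yge hd (by linarith), hat_val_NW hd (by linarith) (by linarith) (by linarith)]
  field_simp
  try ring

lemma pd_psi_10 {d q : ℝ} (hd : 0 < d) {x : ℝ × ℝ} (hx : x ∈ tri (0) (d) (q) (1) (q+d) (0)) :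
    pdx (fun y => 2 * hat d (d, q) y + hat d (d, q + d) y) x = 1/d ∧
    pdy (fun y => 2 * hat d (d, q) y + hat d (d, q + d) y) x = 0 := by
  refine pd_affine (1/d) (0) (0) (isOpen_tri _ _ _ _ _ _) hx (fun y hy => ?_)
  simp only [tri, Set.mem_setOf_eq] at hy
  obtain ⟨g1, g2, g3, g4⟩ := hy
  show 2 * hat d (d, q) y + hat d (d, q + d) y = _
  rw [hat_zero_dle hd (by linarith), hat_val_W hd (by linarith) (by linarith) (by linarith)]
  field_simp
  try ring

lemma pd_phi0_1 {d q : ℝ} (hd : 0 < d) {x : ℝ × ℝ} (hx : x ∈ tri (d) (2*d) (q) (0) (q-d) (1)) :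
    pdx (hat (2*d) (2*d, q)) x = 1/(2*d) ∧
    pdy (hat (2*d) (2*d, q)) x = -1/(2*d) := by
  have hd2 : (0:ℝ) < 2*d := by linarith
  refine pd_affine (1/(2*d)) (-1/(2*d)) (q/(2*d)) (isOpen_tri _ _ _ _ _ _) hx (fun y hy => ?_)
  simp only [tri, Set.mem_setOf_eq] at hy
  obtain ⟨g1, g2, g3, g4⟩ := hy
  rw [hat_val_NW hd2 (by linarith) (by linarith) (by linarith)]
  field_simp
  try ring

lemma pd_phi0_2 {d q : ℝ} (hd : 0 < d) {x : ℝ × ℝ} (hx : x ∈ tri (d) (2*d) (q-d) (1) (q+d) (0)) :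
    pdx (hat (2*d) (2*d, q)) x = 1/(2*d) ∧
    pdy (hat (2*d) (2*d, q)) x = -1/(2*d) := by
  have hd2 : (0:ℝ) < 2*d := by linarith
  refine pd_affine (1/(2*d)) (-1/(2*d)) (q/(2*d)) (isOpen_tri _ _ _ _ _ _) hx (fun y hy => ?_)
  simp only [tri, Set.mem_setOf_eq] at hy
  obtain ⟨g1, g2, g3, g4⟩ := hy
  rw [hat_val_NW hd2 (by linarith) (by linarith) (by linarith)]
  field_simp
  try ring

lemma pd_phi0_3 {d q : ℝ} (hd : 0 < d) {x : ℝ × ℝ} (hx : x ∈ tri (0) (d) (q) (0) (q) (1)) :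
    pdx (hat (2*d) (2*d, q)) x = 1/(2*d) ∧
    pdy (hat (2*d) (2*d, q)) x = -1/(2*d) := by
  have hd2 : (0:ℝ) < 2*d := by linarith
  refine pd_affine (1/(2*d)) (-1/(2*d)) (q/(2*d)) (isOpen_tri _ _ _ _ _ _) hx (fun y hy => ?_)
  simp only [tri, Set.mem_setOf_eq] at hy
  obtain ⟨g1, g2, g3, g4⟩ := hy
  rw [hat_val_NW hd2 (by linarith) (by linarith) (by linarith)]
  field_simp
  try ring

lemma pd_phi0_4 {d q : ℝ} (hd : 0 < d) {x : ℝ × ℝ} (hx : x ∈ tri (0) (d) (q-d) (1) (q) (0)) :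
    pdx (hat (2*d) (2*d, q)) x = 1/(2*d) ∧
    pdy (hat (2*d) (2*d, q)) x = 0 := by
  have hd2 : (0:ℝ) < 2*d := by linarith
  refine pd_affine (1/(2*d)) (0) (0) (isOpen_tri _ _ _ _ _ _) hx (fun y hy => ?_)
  simp only [tri, Set.mem_setOf_eq] at hy
  obtain ⟨g1, g2, g3, g4⟩ := hy
  rw [hat_val_W hd2 (by linarith) (by linarith) (by linarith)]
  field_simp
  try ring

lemma pd_phi0_5 {d q : ℝ} (hd : 0 < d) {x : ℝ × ℝ} (hx : x ∈ tri (0) (d) (q-d) (0) (q-d) (1)) :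
    pdx (hat (2*d) (2*d, q)) x = 1/(2*d) ∧
    pdy (hat (2*d) (2*d, q)) x = 0 := by
  have hd2 : (0:ℝ) < 2*d := by linarith
  refine pd_affine (1/(2*d)) (0) (0) (isOpen_tri _ _ _ _ _ _) hx (fun y hy => ?_)
  simp only [tri, Set.mem_setOf_eq] at hy
  obtain ⟨g1, g2, g3, g4⟩ := hy
  rw [hat_val_W hd2 (by linarith) (by linarith) (by linarith)]
  field_simp
  try ring

lemma pd_phi0_6 {d q : ℝ} (hd : 0 < d) {x : ℝ × ℝ} (hx : x ∈ tri (d) (2*d) (q-2*d) (1) (q) (0)) :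
    pdx (hat (2*d) (2*d, q)) x = 1/(2*d) ∧
    pdy (hat (2*d) (2*d, q)) x = 0 := by
  have hd2 : (0:ℝ) < 2*d := by linarith
  refine pd_affine (1/(2*d)) (0) (0) (isOpen_tri _ _ _ _ _ _) hx (fun y hy => ?_)
  simp only [tri, Set.mem_setOf_eq] at hy
  obtain ⟨g1, g2, g3, g4⟩ := hy
  rw [hat_val_W hd2 (by linarith) (by linarith) (by linarith)]
  field_simp
  try ring

lemma pd_phi0_7 {d q : ℝ} (hd : 0 < d) {x : ℝ × ℝ} (hx : x ∈ tri (d) (2*d) (q+d) (0) (q) (1)) :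
    pdx (hat (2*d) (2*d, q)) x = 1/(2*d) ∧
    pdy (hat (2*d) (2*d, q)) x = -1/(2*d) := by
  have hd2 : (0:ℝ) < 2*d := by linarith
  refine pd_affine (1/(2*d)) (-1/(2*d)) (q/(2*d)) (isOpen_tri _ _ _ _ _ _) hx (fun y hy => ?_)
  simp only [tri, Set.mem_setOf_eq] at hy
  obtain ⟨g1, g2, g3, g4⟩ := hy
  rw [hat_val_NW hd2 (by linarith) (by linarith) (by linarith)]
  field_simp
  try ring

lemma pd_phi0_8 {d q : ℝ} (hd : 0 < d) {x : ℝ × ℝ} (hx : x ∈ tri (d) (2*d) (q) (1) (q+2*d) (0)) :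
    pdx (hat (2*d) (2*d, q)) x = 0 ∧
    pdy (hat (2*d) (2*d, q)) x = 0 := by
  have hd2 : (0:ℝ) < 2*d := by linarith
  refine pd_affine (0) (0) (0) (isOpen_tri _ _ _ _ _ _) hx (fun y hy => ?_)
  simp only [tri, Set.mem_setOf_eq] at hy
  obtain ⟨g1, g2, g3, g4⟩ := hy
  rw [hat_zero_dle hd2 (by linarith)]
  field_simp
  try ring

lemma pd_phi0_9 {d q : ℝ} (hd : 0 < d) {x : ℝ × ℝ} (hx : x ∈ tri (0) (d) (q+d) (0) (q+d) (1)) :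
    pdx (hat (2*d) (2*d, q)) x = 0 ∧
    pdy (hat (2*d) (2*d, q)) x = 0 := by
  have hd2 : (0:ℝ) < 2*d := by linarith
  refine pd_affine (0) (0) (0) (isOpen_tri _ _ _ _ _ _) hx (fun y hy => ?_)
  simp only [tri, Set.mem_setOf_eq] at hy
  obtain ⟨g1, g2, g3, g4⟩ := hy
  rw [hat_zero_dle hd2 (by linarith)]
  field_simp
  try ring

lemma pd_phi0_10 {d q : ℝ} (hd : 0 < d) {x : ℝ × ℝ} (hx : x ∈ tri (0) (d) (q) (1) (q+d) (0)) :
    pdx (hat (2*d) (2*d, q)) x = 0 ∧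
    pdy (hat (2*d) (2*d, q)) x = 0 := by
  have hd2 : (0:ℝ) < 2*d := by linarith
  refine pd_affine (0) (0) (0) (isOpen_tri _ _ _ _ _ _) hx (fun y hy => ?_)
  simp only [tri, Set.mem_setOf_eq] at hy
  obtain ⟨g1, g2, g3, g4⟩ := hy
  rw [hat_zero_dle hd2 (by linarith)]
  field_simp
  try ring

lemma pd_phi1_1 {d q : ℝ} (hd : 0 < d) {x : ℝ × ℝ} (hx : x ∈ tri (d) (2*d) (q) (0) (q-d) (1)) :
    pdx (hat (2*d) (2*d, q + 2*d)) x = 0 ∧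
    pdy (hat (2*d) (2*d, q + 2*d)) x = 1/(2*d) := by
  have hd2 : (0:ℝ) < 2*d := by linarith
  refine pd_affine (0) (1/(2*d)) (-q/(2*d)) (isOpen_tri _ _ _ _ _ _) hx (fun y hy => ?_)
  simp only [tri, Set.mem_setOf_eq] at hy
  obtain ⟨g1, g2, g3, g4⟩ := hy
  rw [hat_val_S hd2 (by linarith) (by linarith) (by linarith)]
  field_simp
  try ring

lemma pd_phi1_2 {d q : ℝ} (hd : 0 < d) {x : ℝ × ℝ} (hx : x ∈ tri (d) (2*d) (q-d) (1) (q+d) (0)) :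
    pdx (hat (2*d) (2*d, q + 2*d)) x = 0 ∧
    pdy (hat (2*d) (2*d, q + 2*d)) x = 1/(2*d) := by
  have hd2 : (0:ℝ) < 2*d := by linarith
  refine pd_affine (0) (1/(2*d)) (-q/(2*d)) (isOpen_tri _ _ _ _ _ _) hx (fun y hy => ?_)
  simp only [tri, Set.mem_setOf_eq] at hy
  obtain ⟨g1, g2, g3, g4⟩ := hy
  rw [hat_val_S hd2 (by linarith) (by linarith) (by linarith)]
  field_simp
  try ring

lemma pd_phi1_3 {d q : ℝ} (hd : 0 < d) {x : ℝ × ℝ} (hx : x ∈ tri (0) (d) (q) (0) (q) (1)) :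
    pdx (hat (2*d) (2*d, q + 2*d)) x = 0 ∧
    pdy (hat (2*d) (2*d, q + 2*d)) x = 1/(2*d) := by
  have hd2 : (0:ℝ) < 2*d := by linarith
  refine pd_affine (0) (1/(2*d)) (-q/(2*d)) (isOpen_tri _ _ _ _ _ _) hx (fun y hy => ?_)
  simp only [tri, Set.mem_setOf_eq] at hy
  obtain ⟨g1, g2, g3, g4⟩ := hy
  rw [hat_val_S hd2 (by linarith) (by linarith) (by linarith)]
  field_simp
  try ring

lemma pd_phi1_4 {d q : ℝ} (hd : 0 < d) {x : ℝ × ℝ} (hx : x ∈ tri (0) (d) (q-d) (1) (q) (0)) :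
    pdx (hat (2*d) (2*d, q + 2*d)) x = 0 ∧
    pdy (hat (2*d) (2*d, q + 2*d)) x = 0 := by
  have hd2 : (0:ℝ) < 2*d := by linarith
  refine pd_affine (0) (0) (0) (isOpen_tri _ _ _ _ _ _) hx (fun y hy => ?_)
  simp only [tri, Set.mem_setOf_eq] at hy
  obtain ⟨g1, g2, g3, g4⟩ := hy
  rw [hat_zero_yle hd2 (by linarith)]
  field_simp
  try ring

lemma pd_phi1_5 {d q : ℝ} (hd : 0 < d) {x : ℝ × ℝ} (hx : x ∈ tri (0) (d) (q-d) (0) (q-d) (1)) :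
    pdx (hat (2*d) (2*d, q + 2*d)) x = 0 ∧
    pdy (hat (2*d) (2*d, q + 2*d)) x = 0 := by
  have hd2 : (0:ℝ) < 2*d := by linarith
  refine pd_affine (0) (0) (0) (isOpen_tri _ _ _ _ _ _) hx (fun y hy => ?_)
  simp only [tri, Set.mem_setOf_eq] at hy
  obtain ⟨g1, g2, g3, g4⟩ := hy
  rw [hat_zero_yle hd2 (by linarith)]
  field_simp
  try ring

lemma pd_phi1_6 {d q : ℝ} (hd : 0 < d) {x : ℝ × ℝ} (hx : x ∈ tri (d) (2*d) (q-2*d) (1) (q) (0)) :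
    pdx (hat (2*d) (2*d, q + 2*d)) x = 0 ∧
    pdy (hat (2*d) (2*d, q + 2*d)) x = 0 := by
  have hd2 : (0:ℝ) < 2*d := by linarith
  refine pd_affine (0) (0) (0) (isOpen_tri _ _ _ _ _ _) hx (fun y hy => ?_)
  simp only [tri, Set.mem_setOf_eq] at hy
  obtain ⟨g1, g2, g3, g4⟩ := hy
  rw [hat_zero_yle hd2 (by linarith)]
  field_simp
  try ring

lemma pd_phi1_7 {d q : ℝ} (hd : 0 < d) {x : ℝ × ℝ} (hx : x ∈ tri (d) (2*d) (q+d) (0) (q) (1)) :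
    pdx (hat (2*d) (2*d, q + 2*d)) x = 0 ∧
    pdy (hat (2*d) (2*d, q + 2*d)) x = 1/(2*d) := by
  have hd2 : (0:ℝ) < 2*d := by linarith
  refine pd_affine (0) (1/(2*d)) (-q/(2*d)) (isOpen_tri _ _ _ _ _ _) hx (fun y hy => ?_)
  simp only [tri, Set.mem_setOf_eq] at hy
  obtain ⟨g1, g2, g3, g4⟩ := hy
  rw [hat_val_S hd2 (by linarith) (by linarith) (by linarith)]
  field_simp
  try ring

lemma pd_phi1_8 {d q : ℝ} (hd : 0 < d) {x : ℝ × ℝ} (hx : x ∈ tri (d) (2*d) (q) (1) (q+2*d) (0)) :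
    pdx (hat (2*d) (2*d, q + 2*d)) x = 1/(2*d) ∧
    pdy (hat (2*d) (2*d, q + 2*d)) x = 0 := by
  have hd2 : (0:ℝ) < 2*d := by linarith
  refine pd_affine (1/(2*d)) (0) (0) (isOpen_tri _ _ _ _ _ _) hx (fun y hy => ?_)
  simp only [tri, Set.mem_setOf_eq] at hy
  obtain ⟨g1, g2, g3, g4⟩ := hy
  rw [hat_val_W hd2 (by linarith) (by linarith) (by linarith)]
  field_simp
  try ring

lemma pd_phi1_9 {d q : ℝ} (hd : 0 < d) {x : ℝ × ℝ} (hx : x ∈ tri (0) (d) (q+d) (0) (q+d) (1)) :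
    pdx (hat (2*d) (2*d, q + 2*d)) x = 1/(2*d) ∧
    pdy (hat (2*d) (2*d, q + 2*d)) x = 0 := by
  have hd2 : (0:ℝ) < 2*d := by linarith
  refine pd_affine (1/(2*d)) (0) (0) (isOpen_tri _ _ _ _ _ _) hx (fun y hy => ?_)
  simp only [tri, Set.mem_setOf_eq] at hy
  obtain ⟨g1, g2, g3, g4⟩ := hy
  rw [hat_val_W hd2 (by linarith) (by linarith) (by linarith)]
  field_simp
  try ring

lemma pd_phi1_10 {d q : ℝ} (hd : 0 < d) {x : ℝ × ℝ} (hx : x ∈ tri (0) (d) (q) (1) (q+d) (0)) :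
    pdx (hat (2*d) (2*d, q + 2*d)) x = 1/(2*d) ∧
    pdy (hat (2*d) (2*d, q + 2*d)) x = 0 := by
  have hd2 : (0:ℝ) < 2*d := by linarith
  refine pd_affine (1/(2*d)) (0) (0) (isOpen_tri _ _ _ _ _ _) hx (fun y hy => ?_)
  simp only [tri, Set.mem_setOf_eq] at hy
  obtain ⟨g1, g2, g3, g4⟩ := hy
  rw [hat_val_W hd2 (by linarith) (by linarith) (by linarith)]
  field_simp
  try ring

lemma vol_T1 {d q : ℝ} (hd : 0 < d) :
    volume (tri (d) (2*d) (q) (0) (q-d) (1)) = ENNReal.ofReal (d^2/2) := by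
  rw [volume_tri (by linarith) (fun x hx1 hx2 => by linarith)]
  congr 1; ring

lemma vol_T2 {d q : ℝ} (hd : 0 < d) :
    volume (tri (d) (2*d) (q-d) (1) (q+d) (0)) = ENNReal.ofReal (d^2/2) := by
  rw [volume_tri (by linarith) (fun x hx1 hx2 => by linarith)]
  congr 1; ring

lemma vol_T3 {d q : ℝ} (hd : 0 < d) :
    volume (tri (0) (d) (q) (0) (q) (1)) = ENNReal.ofReal (d^2/2) := by
  rw [volume_tri (by linarith) (fun x hx1 hx2 => by linarith)]
  congr 1; ring

lemma vol_T4 {d q : ℝ} (hd : 0 < d) :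
    volume (tri (0) (d) (q-d) (1) (q) (0)) = ENNReal.ofReal (d^2/2) := by
  rw [volume_tri (by linarith) (fun x hx1 hx2 => by linarith)]
  congr 1; ring

lemma vol_T5 {d q : ℝ} (hd : 0 < d) :
    volume (tri (0) (d) (q-d) (0) (q-d) (1)) = ENNReal.ofReal (d^2/2) := by
  rw [volume_tri (by linarith) (fun x hx1 hx2 => by linarith)]
  congr 1; ring

lemma vol_T6 {d q : ℝ} (hd : 0 < d) :
    volume (tri (d) (2*d) (q-2*d) (1) (q) (0)) = ENNReal.ofReal (d^2/2) := by
  rw [volume_tri (by linarith) (fun x hx1 hx2 => by linarith)]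
  congr 1; ring

lemma vol_T7 {d q : ℝ} (hd : 0 < d) :
    volume (tri (d) (2*d) (q+d) (0) (q) (1)) = ENNReal.ofReal (d^2/2) := by
  rw [volume_tri (by linarith) (fun x hx1 hx2 => by linarith)]
  congr 1; ring

lemma vol_T8 {d q : ℝ} (hd : 0 < d) :
    volume (tri (d) (2*d) (q) (1) (q+2*d) (0)) = ENNReal.ofReal (d^2/2) := by
  rw [volume_tri (by linarith) (fun x hx1 hx2 => by linarith)]
  congr 1; ring

lemma vol_T9 {d q : ℝ} (hd : 0 < d) :
    volume (tri (0) (d) (q+d) (0) (q+d) (1)) = ENNReal.ofReal (d^2/2) := by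
  rw [volume_tri (by linarith) (fun x hx1 hx2 => by linarith)]
  congr 1; ring

lemma vol_T10 {d q : ℝ} (hd : 0 < d) :
    volume (tri (0) (d) (q) (1) (q+d) (0)) = ENNReal.ofReal (d^2/2) := by
  rw [volume_tri (by linarith) (fun x hx1 hx2 => by linarith)]
  congr 1; ring

lemma integral_zero_of_ae_zero {G : ℝ × ℝ → ℝ} {S NN : Set (ℝ × ℝ)}
    (hNN : volume NN = 0) (hS : MeasurableSet S)
    (hpt : ∀ p ∈ S, p ∉ NN → G p = 0) : ∫ p in S, G p = 0 := by
  have h0 : (volume.restrict S) NN = 0 :=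
    le_antisymm (le_trans (Measure.le_iff'.1 Measure.restrict_le_self NN) hNN.le) zero_le
  have hae : ∀ᵐ p ∂(volume.restrict S), p ∉ NN := measure_eq_zero_iff_ae_notMem.mp h0
  have heq : G =ᵐ[volume.restrict S] fun _ => 0 := by
    filter_upwards [hae, ae_restrict_mem hS] with p h1 h2
    exact hpt p h2 h1
  rw [integral_congr_ae heq]
  simp

lemma psi_out_full {d q : ℝ} (hd : 0 < d) {x : ℝ × ℝ}
    (hv0 : x.1 ≠ 0) (hvd : x.1 ≠ d) (hv2 : x.1 ≠ 2*d)
    (hh1 : x.2 ≠ q - d) (hh2 : x.2 ≠ q) (hh3 : x.2 ≠ q + d) (hh4 : x.2 ≠ q + 2*d)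
    (hg1 : x.1 - x.2 ≠ d - q) (hg2 : x.1 - x.2 ≠ -q) (hg3 : x.1 - x.2 ≠ 2*d - q)
    (hg4 : x.1 - x.2 ≠ -q - d)
    (hT1 : x ∉ tri (d) (2*d) (q) (0) (q-d) (1))
    (hT2 : x ∉ tri (d) (2*d) (q-d) (1) (q+d) (0))
    (hT3 : x ∉ tri (0) (d) (q) (0) (q) (1))
    (hT4 : x ∉ tri (0) (d) (q-d) (1) (q) (0))
    (hT5 : x ∉ tri (0) (d) (q-d) (0) (q-d) (1))
    (hT6 : x ∉ tri (d) (2*d) (q-2*d) (1) (q) (0))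
    (hT7 : x ∉ tri (d) (2*d) (q+d) (0) (q) (1))
    (hT8 : x ∉ tri (d) (2*d) (q) (1) (q+2*d) (0))
    (hT9 : x ∉ tri (0) (d) (q+d) (0) (q+d) (1))
    (hT10 : x ∉ tri (0) (d) (q) (1) (q+d) (0)) :
    pdx (fun y => 2 * hat d (d, q) y + hat d (d, q + d) y) x = 0 ∧
    pdy (fun y => 2 * hat d (d, q) y + hat d (d, q + d) y) x = 0 := by
  have hMAne : max |x.1 - d| (max |x.2 - q| |(x.1 - d) - (x.2 - q)|) ≠ d :=
    M_ne hd (fun hc => hv2 (by linarith)) (fun hc => hv0 (by linarith))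
      (fun hc => hh3 (by linarith)) (fun hc => hh1 (by linarith))
      (fun hc => hg3 (by linarith)) (fun hc => hg2 (by linarith))
  have hMBne : max |x.1 - d| (max |x.2 - (q + d)| |(x.1 - d) - (x.2 - (q + d))|) ≠ d :=
    M_ne hd (fun hc => hv2 (by linarith)) (fun hc => hv0 (by linarith))
      (fun hc => hh4 (by linarith)) (fun hc => hh2 (by linarith))
      (fun hc => hg1 (by linarith)) (fun hc => hg4 (by linarith))
  rcases lt_trichotomy (max |x.1 - d| (max |x.2 - q| |(x.1 - d) - (x.2 - q)|)) d with hA | hA | hA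
  · exfalso
    have c1 := abs_lt.1 (lt_of_le_of_lt (le_max_left _ _) hA)
    have c2 := abs_lt.1 (lt_of_le_of_lt ((le_max_left _ _).trans (le_max_right _ _)) hA)
    have c3 := abs_lt.1 (lt_of_le_of_lt ((le_max_right _ _).trans (le_max_right _ _)) hA)
    rcases lt_trichotomy x.1 d with s1 | s1 | s1
    · rcases lt_trichotomy x.2 q with s2 | s2 | s2
      · rcases lt_trichotomy (x.1 - x.2) (d - q) with s3 | s3 | s3
        · exact hT4 ⟨by linarith, by linarith, by linarith, by linarith⟩
        · exact hg1 s3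
        · exact hT5 ⟨by linarith, by linarith, by linarith, by linarith⟩
      · exact hh2 s2
      · exact hT3 ⟨by linarith, by linarith, by linarith, by linarith⟩
    · exact hvd s1
    · rcases lt_trichotomy x.2 q with s2 | s2 | s2
      · exact hT6 ⟨by linarith, by linarith, by linarith, by linarith⟩
      · exact hh2 s2
      · rcases lt_trichotomy (x.1 - x.2) (d - q) with s3 | s3 | s3
        · exact hT2 ⟨by linarith, by linarith, by linarith, by linarith⟩
        · exact hg1 s3
        · exact hT1 ⟨by linarith, by linarith, by linarith, by linarith⟩
  · exact absurd hA hMAne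
  · rcases lt_trichotomy (max |x.1 - d| (max |x.2 - (q + d)| |(x.1 - d) - (x.2 - (q + d))|)) d
      with hB | hB | hB
    · exfalso
      have c1 := abs_lt.1 (lt_of_le_of_lt (le_max_left _ _) hB)
      have c2 := abs_lt.1 (lt_of_le_of_lt ((le_max_left _ _).trans (le_max_right _ _)) hB)
      have c3 := abs_lt.1 (lt_of_le_of_lt ((le_max_right _ _).trans (le_max_right _ _)) hB)
      rcases lt_trichotomy x.1 d with s1 | s1 | s1
      · rcases lt_trichotomy x.2 (q + d) with s2 | s2 | s2
        · rcases lt_trichotomy (x.1 - x.2) (-q) with s3 | s3 | s3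
          · exact hT10 ⟨by linarith, by linarith, by linarith, by linarith⟩
          · exact hg2 s3
          · exact hT3 ⟨by linarith, by linarith, by linarith, by linarith⟩
        · exact hh3 s2
        · exact hT9 ⟨by linarith, by linarith, by linarith, by linarith⟩
      · exact hvd s1
      · rcases lt_trichotomy x.2 (q + d) with s2 | s2 | s2
        · exact hT2 ⟨by linarith, by linarith, by linarith, by linarith⟩
        · exact hh3 s2
        · rcases lt_trichotomy (x.1 - x.2) (-q) with s3 | s3 | s3
          · exact hT8 ⟨by linarith, by linarith, by linarith, by linarith⟩
          · exact hg2 s3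
          · exact hT7 ⟨by linarith, by linarith, by linarith, by linarith⟩
    · exact absurd hB hMBne
    · exact pd_psi_out hd hA hB


lemma far_phi_out {d q : ℝ} (hd : 0 < d) {mr nr kr : ℝ} (hm1 : 1 ≤ mr)
    (hfar : 2 ≤ mr ∨ (nr ≤ kr - 1 ∧ mr = 1) ∨ kr + 2 ≤ nr) (hq : q = 2*kr*d)
    {p : ℝ × ℝ} (b1 : p.1 < 2*d) (b2 : p.2 < q + 2*d) (b3 : p.1 - p.2 < d - q + d) :
    2*d < max |p.1 - 2*d*mr| (max |p.2 - 2*d*nr| |(p.1 - 2*d*mr) - (p.2 - 2*d*nr)|) := by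
  subst hq
  rcases hfar with h | ⟨h, hm⟩ | h
  · refine lt_of_lt_of_le (lt_of_lt_of_le ?_ (neg_le_abs _)) (le_max_left _ _)
    nlinarith [mul_nonneg (by linarith : (0:ℝ) ≤ mr - 2) hd.le]
  · refine lt_of_lt_of_le (lt_of_lt_of_le ?_ (neg_le_abs _))
      ((le_max_right _ _).trans (le_max_right _ _))
    rw [hm]
    nlinarith [mul_nonneg (by linarith : (0:ℝ) ≤ kr - 1 - nr) hd.le]
  · refine lt_of_lt_of_le (lt_of_lt_of_le ?_ (neg_le_abs _))
      ((le_max_left _ _).trans (le_max_right _ _))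
    nlinarith [mul_nonneg (by linarith : (0:ℝ) ≤ nr - kr - 2) hd.le]

set_option maxHeartbeats 4000000 in
lemma main0 {d q : ℝ} (hd : 0 < d) (hq1 : 2*d ≤ q) (hq2 : q + 2*d ≤ 1) :
    ∫ p in Omg, (pdx (fun y => 2 * hat d (d, q) y + hat d (d, q + d) y) p * pdx (hat (2*d) (2*d, q)) p + pdy (fun y => 2 * hat d (d, q) y + hat d (d, q + d) y) p * pdy (hat (2*d) (2*d, q)) p) = 0 := by
  have hOmgMeas : MeasurableSet Omg := measurableSet_Ioo.prod measurableSet_Ioo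
  have hNNnull : volume ({p : ℝ × ℝ | p.1 = 0} ∪ ({p : ℝ × ℝ | p.1 = d} ∪ ({p : ℝ × ℝ | p.1 = 2*d} ∪ ({p : ℝ × ℝ | p.2 = q - d} ∪ ({p : ℝ × ℝ | p.2 = q} ∪ ({p : ℝ × ℝ | p.2 = q + d} ∪ ({p : ℝ × ℝ | p.2 = q + 2*d} ∪ ({p : ℝ × ℝ | p.1 - p.2 = d - q} ∪ ({p : ℝ × ℝ | p.1 - p.2 = -q} ∪ ({p : ℝ × ℝ | p.1 - p.2 = 2*d - q} ∪ ({p : ℝ × ℝ | p.1 - p.2 = -q - d}))))))))))) = 0 :=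
    measure_union_null (null_v 0) (measure_union_null (null_v d) (measure_union_null (null_v (2*d)) (measure_union_null (null_h (q - d)) (measure_union_null (null_h q) (measure_union_null (null_h (q + d)) (measure_union_null (null_h (q + 2*d)) (measure_union_null (null_d (d - q)) (measure_union_null (null_d (-q)) (measure_union_null (null_d (2*d - q)) (null_d (-q - d)))))))))))
  have hd2 : (0:ℝ) < 2*d := by linarith
  have hInt : IntegrableOn (fun p => pdx (fun y => 2 * hat d (d, q) y + hat d (d, q + d) y) p * pdx (hat (2*d) (2*d, q)) p + pdy (fun y => 2 * hat d (d, q) y + hat d (d, q + d) y) p * pdy (hat (2*d) (2*d, q)) p) Omg :=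
    integrableG (lip_psi hd) (lip_hat hd2 (2*d, q))
  have sub1 : tri (d) (2*d) (q) (0) (q-d) (1) ⊆ Omg := by
    intro p hp
    simp only [tri, Set.mem_setOf_eq] at hp
    obtain ⟨m1, m2, m3, m4⟩ := hp
    simp only [Omg, Set.mem_prod, Set.mem_Ioo]
    refine ⟨⟨?_, ?_⟩, ?_, ?_⟩ <;> linarith
  have sub2 : tri (d) (2*d) (q-d) (1) (q+d) (0) ⊆ (Omg \ tri (d) (2*d) (q) (0) (q-d) (1)) := by
    intro p hp
    simp only [tri, Set.mem_setOf_eq] at hp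
    obtain ⟨m1, m2, m3, m4⟩ := hp
    simp only [Set.mem_diff, Omg, Set.mem_prod, Set.mem_Ioo, tri, Set.mem_setOf_eq]
    refine ⟨⟨⟨?_, ?_⟩, ?_, ?_⟩, ?_⟩
    all_goals first
    | linarith
    | (rintro ⟨w1, w2, w3, w4⟩; linarith)
  have sub3 : tri (0) (d) (q) (0) (q) (1) ⊆ ((Omg \ tri (d) (2*d) (q) (0) (q-d) (1)) \ tri (d) (2*d) (q-d) (1) (q+d) (0)) := by
    intro p hp
    simp only [tri, Set.mem_setOf_eq] at hp
    obtain ⟨m1, m2, m3, m4⟩ := hp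
    simp only [Set.mem_diff, Omg, Set.mem_prod, Set.mem_Ioo, tri, Set.mem_setOf_eq]
    refine ⟨⟨⟨⟨?_, ?_⟩, ?_, ?_⟩, ?_⟩, ?_⟩
    all_goals first
    | linarith
    | (rintro ⟨w1, w2, w3, w4⟩; linarith)
  have sub4 : tri (0) (d) (q-d) (1) (q) (0) ⊆ (((Omg \ tri (d) (2*d) (q) (0) (q-d) (1)) \ tri (d) (2*d) (q-d) (1) (q+d) (0)) \ tri (0) (d) (q) (0) (q) (1)) := by
    intro p hp
    simp only [tri, Set.mem_setOf_eq] at hp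
    obtain ⟨m1, m2, m3, m4⟩ := hp
    simp only [Set.mem_diff, Omg, Set.mem_prod, Set.mem_Ioo, tri, Set.mem_setOf_eq]
    refine ⟨⟨⟨⟨⟨?_, ?_⟩, ?_, ?_⟩, ?_⟩, ?_⟩, ?_⟩
    all_goals first
    | linarith
    | (rintro ⟨w1, w2, w3, w4⟩; linarith)
  have sub5 : tri (0) (d) (q-d) (0) (q-d) (1) ⊆ ((((Omg \ tri (d) (2*d) (q) (0) (q-d) (1)) \ tri (d) (2*d) (q-d) (1) (q+d) (0)) \ tri (0) (d) (q) (0) (q) (1)) \ tri (0) (d) (q-d) (1) (q) (0)) := by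
    intro p hp
    simp only [tri, Set.mem_setOf_eq] at hp
    obtain ⟨m1, m2, m3, m4⟩ := hp
    simp only [Set.mem_diff, Omg, Set.mem_prod, Set.mem_Ioo, tri, Set.mem_setOf_eq]
    refine ⟨⟨⟨⟨⟨⟨?_, ?_⟩, ?_, ?_⟩, ?_⟩, ?_⟩, ?_⟩, ?_⟩
    all_goals first
    | linarith
    | (rintro ⟨w1, w2, w3, w4⟩; linarith)
  have sub6 : tri (d) (2*d) (q-2*d) (1) (q) (0) ⊆ (((((Omg \ tri (d) (2*d) (q) (0) (q-d) (1)) \ tri (d) (2*d) (q-d) (1) (q+d) (0)) \ tri (0) (d) (q) (0) (q) (1)) \ tri (0) (d) (q-d) (1) (q) (0)) \ tri (0) (d) (q-d) (0) (q-d) (1)) := by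
    intro p hp
    simp only [tri, Set.mem_setOf_eq] at hp
    obtain ⟨m1, m2, m3, m4⟩ := hp
    simp only [Set.mem_diff, Omg, Set.mem_prod, Set.mem_Ioo, tri, Set.mem_setOf_eq]
    refine ⟨⟨⟨⟨⟨⟨⟨?_, ?_⟩, ?_, ?_⟩, ?_⟩, ?_⟩, ?_⟩, ?_⟩, ?_⟩
    all_goals first
    | linarith
    | (rintro ⟨w1, w2, w3, w4⟩; linarith)
  have sub7 : tri (d) (2*d) (q+d) (0) (q) (1) ⊆ ((((((Omg \ tri (d) (2*d) (q) (0) (q-d) (1)) \ tri (d) (2*d) (q-d) (1) (q+d) (0)) \ tri (0) (d) (q) (0) (q) (1)) \ tri (0) (d) (q-d) (1) (q) (0)) \ tri (0) (d) (q-d) (0) (q-d) (1)) \ tri (d) (2*d) (q-2*d) (1) (q) (0)) := by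
    intro p hp
    simp only [tri, Set.mem_setOf_eq] at hp
    obtain ⟨m1, m2, m3, m4⟩ := hp
    simp only [Set.mem_diff, Omg, Set.mem_prod, Set.mem_Ioo, tri, Set.mem_setOf_eq]
    refine ⟨⟨⟨⟨⟨⟨⟨⟨?_, ?_⟩, ?_, ?_⟩, ?_⟩, ?_⟩, ?_⟩, ?_⟩, ?_⟩, ?_⟩
    all_goals first
    | linarith
    | (rintro ⟨w1, w2, w3, w4⟩; linarith)
  have sub8 : tri (d) (2*d) (q) (1) (q+2*d) (0) ⊆ (((((((Omg \ tri (d) (2*d) (q) (0) (q-d) (1)) \ tri (d) (2*d) (q-d) (1) (q+d) (0)) \ tri (0) (d) (q) (0) (q) (1)) \ tri (0) (d) (q-d) (1) (q) (0)) \ tri (0) (d) (q-d) (0) (q-d) (1)) \ tri (d) (2*d) (q-2*d) (1) (q) (0)) \ tri (d) (2*d) (q+d) (0) (q) (1)) := by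
    intro p hp
    simp only [tri, Set.mem_setOf_eq] at hp
    obtain ⟨m1, m2, m3, m4⟩ := hp
    simp only [Set.mem_diff, Omg, Set.mem_prod, Set.mem_Ioo, tri, Set.mem_setOf_eq]
    refine ⟨⟨⟨⟨⟨⟨⟨⟨⟨?_, ?_⟩, ?_, ?_⟩, ?_⟩, ?_⟩, ?_⟩, ?_⟩, ?_⟩, ?_⟩, ?_⟩
    all_goals first
    | linarith
    | (rintro ⟨w1, w2, w3, w4⟩; linarith)
  have sub9 : tri (0) (d) (q+d) (0) (q+d) (1) ⊆ ((((((((Omg \ tri (d) (2*d) (q) (0) (q-d) (1)) \ tri (d) (2*d) (q-d) (1) (q+d) (0)) \ tri (0) (d) (q) (0) (q) (1)) \ tri (0) (d) (q-d) (1) (q) (0)) \ tri (0) (d) (q-d) (0) (q-d) (1)) \ tri (d) (2*d) (q-2*d) (1) (q) (0)) \ tri (d) (2*d) (q+d) (0) (q) (1)) \ tri (d) (2*d) (q) (1) (q+2*d) (0)) := by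
    intro p hp
    simp only [tri, Set.mem_setOf_eq] at hp
    obtain ⟨m1, m2, m3, m4⟩ := hp
    simp only [Set.mem_diff, Omg, Set.mem_prod, Set.mem_Ioo, tri, Set.mem_setOf_eq]
    refine ⟨⟨⟨⟨⟨⟨⟨⟨⟨⟨?_, ?_⟩, ?_, ?_⟩, ?_⟩, ?_⟩, ?_⟩, ?_⟩, ?_⟩, ?_⟩, ?_⟩, ?_⟩
    all_goals first
    | linarith
    | (rintro ⟨w1, w2, w3, w4⟩; linarith)
  have sub10 : tri (0) (d) (q) (1) (q+d) (0) ⊆ (((((((((Omg \ tri (d) (2*d) (q) (0) (q-d) (1)) \ tri (d) (2*d) (q-d) (1) (q+d) (0)) \ tri (0) (d) (q) (0) (q) (1)) \ tri (0) (d) (q-d) (1) (q) (0)) \ tri (0) (d) (q-d) (0) (q-d) (1)) \ tri (d) (2*d) (q-2*d) (1) (q) (0)) \ tri (d) (2*d) (q+d) (0) (q) (1)) \ tri (d) (2*d) (q) (1) (q+2*d) (0)) \ tri (0) (d) (q+d) (0) (q+d) (1)) := by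
    intro p hp
    simp only [tri, Set.mem_setOf_eq] at hp
    obtain ⟨m1, m2, m3, m4⟩ := hp
    simp only [Set.mem_diff, Omg, Set.mem_prod, Set.mem_Ioo, tri, Set.mem_setOf_eq]
    refine ⟨⟨⟨⟨⟨⟨⟨⟨⟨⟨⟨?_, ?_⟩, ?_, ?_⟩, ?_⟩, ?_⟩, ?_⟩, ?_⟩, ?_⟩, ?_⟩, ?_⟩, ?_⟩, ?_⟩
    all_goals first
    | linarith
    | (rintro ⟨w1, w2, w3, w4⟩; linarith)
  have val1 : ∀ p ∈ tri (d) (2*d) (q) (0) (q-d) (1),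
      pdx (fun y => 2 * hat d (d, q) y + hat d (d, q + d) y) p * pdx (hat (2*d) (2*d, q)) p + pdy (fun y => 2 * hat d (d, q) y + hat d (d, q + d) y) p * pdy (hat (2*d) (2*d, q)) p = -(1/d^2) := by
    intro p hp
    obtain ⟨a1, a2⟩ := pd_psi_1 hd hp
    obtain ⟨b1, b2⟩ := pd_phi0_1 hd hp
    rw [a1, a2, b1, b2]
    field_simp
    try ring
  have val2 : ∀ p ∈ tri (d) (2*d) (q-d) (1) (q+d) (0),
      pdx (fun y => 2 * hat d (d, q) y + hat d (d, q + d) y) p * pdx (hat (2*d) (2*d, q)) p + pdy (fun y => 2 * hat d (d, q) y + hat d (d, q + d) y) p * pdy (hat (2*d) (2*d, q)) p = 0 := by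
    intro p hp
    obtain ⟨a1, a2⟩ := pd_psi_2 hd hp
    obtain ⟨b1, b2⟩ := pd_phi0_2 hd hp
    rw [a1, a2, b1, b2]
    field_simp
    try ring
  have val3 : ∀ p ∈ tri (0) (d) (q) (0) (q) (1),
      pdx (fun y => 2 * hat d (d, q) y + hat d (d, q + d) y) p * pdx (hat (2*d) (2*d, q)) p + pdy (fun y => 2 * hat d (d, q) y + hat d (d, q + d) y) p * pdy (hat (2*d) (2*d, q)) p = 3/(2*d^2) := by
    intro p hp
    obtain ⟨a1, a2⟩ := pd_psi_3 hd hp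
    obtain ⟨b1, b2⟩ := pd_phi0_3 hd hp
    rw [a1, a2, b1, b2]
    field_simp
    try ring
  have val4 : ∀ p ∈ tri (0) (d) (q-d) (1) (q) (0),
      pdx (fun y => 2 * hat d (d, q) y + hat d (d, q + d) y) p * pdx (hat (2*d) (2*d, q)) p + pdy (fun y => 2 * hat d (d, q) y + hat d (d, q + d) y) p * pdy (hat (2*d) (2*d, q)) p = 1/d^2 := by
    intro p hp
    obtain ⟨a1, a2⟩ := pd_psi_4 hd hp
    obtain ⟨b1, b2⟩ := pd_phi0_4 hd hp
    rw [a1, a2, b1, b2]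
    field_simp
    try ring
  have val5 : ∀ p ∈ tri (0) (d) (q-d) (0) (q-d) (1),
      pdx (fun y => 2 * hat d (d, q) y + hat d (d, q + d) y) p * pdx (hat (2*d) (2*d, q)) p + pdy (fun y => 2 * hat d (d, q) y + hat d (d, q + d) y) p * pdy (hat (2*d) (2*d, q)) p = 0 := by
    intro p hp
    obtain ⟨a1, a2⟩ := pd_psi_5 hd hp
    obtain ⟨b1, b2⟩ := pd_phi0_5 hd hp
    rw [a1, a2, b1, b2]
    field_simp
    try ring
  have val6 : ∀ p ∈ tri (d) (2*d) (q-2*d) (1) (q) (0),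
      pdx (fun y => 2 * hat d (d, q) y + hat d (d, q + d) y) p * pdx (hat (2*d) (2*d, q)) p + pdy (fun y => 2 * hat d (d, q) y + hat d (d, q + d) y) p * pdy (hat (2*d) (2*d, q)) p = -(1/d^2) := by
    intro p hp
    obtain ⟨a1, a2⟩ := pd_psi_6 hd hp
    obtain ⟨b1, b2⟩ := pd_phi0_6 hd hp
    rw [a1, a2, b1, b2]
    field_simp
    try ring
  have val7 : ∀ p ∈ tri (d) (2*d) (q+d) (0) (q) (1),
      pdx (fun y => 2 * hat d (d, q) y + hat d (d, q + d) y) p * pdx (hat (2*d) (2*d, q)) p + pdy (fun y => 2 * hat d (d, q) y + hat d (d, q + d) y) p * pdy (hat (2*d) (2*d, q)) p = -(1/(2*d^2)) := by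
    intro p hp
    obtain ⟨a1, a2⟩ := pd_psi_7 hd hp
    obtain ⟨b1, b2⟩ := pd_phi0_7 hd hp
    rw [a1, a2, b1, b2]
    field_simp
    try ring
  have val8 : ∀ p ∈ tri (d) (2*d) (q) (1) (q+2*d) (0),
      pdx (fun y => 2 * hat d (d, q) y + hat d (d, q + d) y) p * pdx (hat (2*d) (2*d, q)) p + pdy (fun y => 2 * hat d (d, q) y + hat d (d, q + d) y) p * pdy (hat (2*d) (2*d, q)) p = 0 := by
    intro p hp
    obtain ⟨a1, a2⟩ := pd_psi_8 hd hp
    obtain ⟨b1, b2⟩ := pd_phi0_8 hd hp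
    rw [a1, a2, b1, b2]
    field_simp
    try ring
  have val9 : ∀ p ∈ tri (0) (d) (q+d) (0) (q+d) (1),
      pdx (fun y => 2 * hat d (d, q) y + hat d (d, q + d) y) p * pdx (hat (2*d) (2*d, q)) p + pdy (fun y => 2 * hat d (d, q) y + hat d (d, q + d) y) p * pdy (hat (2*d) (2*d, q)) p = 0 := by
    intro p hp
    obtain ⟨a1, a2⟩ := pd_psi_9 hd hp
    obtain ⟨b1, b2⟩ := pd_phi0_9 hd hp
    rw [a1, a2, b1, b2]
    field_simp
    try ring
  have val10 : ∀ p ∈ tri (0) (d) (q) (1) (q+d) (0),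
      pdx (fun y => 2 * hat d (d, q) y + hat d (d, q + d) y) p * pdx (hat (2*d) (2*d, q)) p + pdy (fun y => 2 * hat d (d, q) y + hat d (d, q + d) y) p * pdy (hat (2*d) (2*d, q)) p = 0 := by
    intro p hp
    obtain ⟨a1, a2⟩ := pd_psi_10 hd hp
    obtain ⟨b1, b2⟩ := pd_phi0_10 hd hp
    rw [a1, a2, b1, b2]
    field_simp
    try ring
  have rem : ∫ p in ((((((((((Omg \ tri (d) (2*d) (q) (0) (q-d) (1)) \ tri (d) (2*d) (q-d) (1) (q+d) (0)) \ tri (0) (d) (q) (0) (q) (1)) \ tri (0) (d) (q-d) (1) (q) (0)) \ tri (0) (d) (q-d) (0) (q-d) (1)) \ tri (d) (2*d) (q-2*d) (1) (q) (0)) \ tri (d) (2*d) (q+d) (0) (q) (1)) \ tri (d) (2*d) (q) (1) (q+2*d) (0)) \ tri (0) (d) (q+d) (0) (q+d) (1)) \ tri (0) (d) (q) (1) (q+d) (0)),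
      (pdx (fun y => 2 * hat d (d, q) y + hat d (d, q + d) y) p * pdx (hat (2*d) (2*d, q)) p + pdy (fun y => 2 * hat d (d, q) y + hat d (d, q + d) y) p * pdy (hat (2*d) (2*d, q)) p) = 0 := by
    refine integral_zero_of_ae_zero hNNnull ((((((((((hOmgMeas.diff (measurableSet_tri (d) (2*d) (q) (0) (q-d) (1))).diff (measurableSet_tri (d) (2*d) (q-d) (1) (q+d) (0))).diff (measurableSet_tri (0) (d) (q) (0) (q) (1))).diff (measurableSet_tri (0) (d) (q-d) (1) (q) (0))).diff (measurableSet_tri (0) (d) (q-d) (0) (q-d) (1))).diff (measurableSet_tri (d) (2*d) (q-2*d) (1) (q) (0))).diff (measurableSet_tri (d) (2*d) (q+d) (0) (q) (1))).diff (measurableSet_tri (d) (2*d) (q) (1) (q+2*d) (0))).diff (measurableSet_tri (0) (d) (q+d) (0) (q+d) (1))).diff (measurableSet_tri (0) (d) (q) (1) (q+d) (0))) ?_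
    intro p hpS hpN
    simp only [Set.mem_union, Set.mem_setOf_eq, not_or] at hpN
    obtain ⟨n1, n2, n3, n4, n5, n6, n7, n8, n9, n10, n11⟩ := hpN
    simp only [Set.mem_diff] at hpS
    obtain ⟨⟨⟨⟨⟨⟨⟨⟨⟨⟨hOmgp, t1⟩, t2⟩, t3⟩, t4⟩, t5⟩, t6⟩, t7⟩, t8⟩, t9⟩, t10⟩ := hpS
    obtain ⟨o1, o2⟩ := psi_out_full hd n1 n2 n3 n4 n5 n6 n7 n8 n9 n10 n11 t1 t2 t3 t4 t5 t6 t7 t8 t9 t10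
    rw [o1, o2]; ring
  rw [peel hInt (measurableSet_tri (d) (2*d) (q) (0) (q-d) (1)) sub1 val1 (vol_T1 hd) (by positivity)]
  rw [peel (hInt.mono_set Set.diff_subset) (measurableSet_tri (d) (2*d) (q-d) (1) (q+d) (0)) sub2 val2 (vol_T2 hd) (by positivity)]
  rw [peel (hInt.mono_set (Set.diff_subset.trans Set.diff_subset)) (measurableSet_tri (0) (d) (q) (0) (q) (1)) sub3 val3 (vol_T3 hd) (by positivity)]
  rw [peel (hInt.mono_set (Set.diff_subset.trans (Set.diff_subset.trans Set.diff_subset))) (measurableSet_tri (0) (d) (q-d) (1) (q) (0)) sub4 val4 (vol_T4 hd) (by positivity)]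
  rw [peel (hInt.mono_set (Set.diff_subset.trans (Set.diff_subset.trans (Set.diff_subset.trans Set.diff_subset)))) (measurableSet_tri (0) (d) (q-d) (0) (q-d) (1)) sub5 val5 (vol_T5 hd) (by positivity)]
  rw [peel (hInt.mono_set (Set.diff_subset.trans (Set.diff_subset.trans (Set.diff_subset.trans (Set.diff_subset.trans Set.diff_subset))))) (measurableSet_tri (d) (2*d) (q-2*d) (1) (q) (0)) sub6 val6 (vol_T6 hd) (by positivity)]
  rw [peel (hInt.mono_set (Set.diff_subset.trans (Set.diff_subset.trans (Set.diff_subset.trans (Set.diff_subset.trans (Set.diff_subset.trans Set.diff_subset)))))) (measurableSet_tri (d) (2*d) (q+d) (0) (q) (1)) sub7 val7 (vol_T7 hd) (by positivity)]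
  rw [peel (hInt.mono_set (Set.diff_subset.trans (Set.diff_subset.trans (Set.diff_subset.trans (Set.diff_subset.trans (Set.diff_subset.trans (Set.diff_subset.trans Set.diff_subset))))))) (measurableSet_tri (d) (2*d) (q) (1) (q+2*d) (0)) sub8 val8 (vol_T8 hd) (by positivity)]
  rw [peel (hInt.mono_set (Set.diff_subset.trans (Set.diff_subset.trans (Set.diff_subset.trans (Set.diff_subset.trans (Set.diff_subset.trans (Set.diff_subset.trans (Set.diff_subset.trans Set.diff_subset)))))))) (measurableSet_tri (0) (d) (q+d) (0) (q+d) (1)) sub9 val9 (vol_T9 hd) (by positivity)]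
  rw [peel (hInt.mono_set (Set.diff_subset.trans (Set.diff_subset.trans (Set.diff_subset.trans (Set.diff_subset.trans (Set.diff_subset.trans (Set.diff_subset.trans (Set.diff_subset.trans (Set.diff_subset.trans Set.diff_subset))))))))) (measurableSet_tri (0) (d) (q) (1) (q+d) (0)) sub10 val10 (vol_T10 hd) (by positivity)]
  rw [rem]
  field_simp
  try ring


set_option maxHeartbeats 4000000 in
lemma main1 {d q : ℝ} (hd : 0 < d) (hq1 : 2*d ≤ q) (hq2 : q + 2*d ≤ 1) :
    ∫ p in Omg, (pdx (fun y => 2 * hat d (d, q) y + hat d (d, q + d) y) p * pdx (hat (2*d) (2*d, q + 2*d)) p + pdy (fun y => 2 * hat d (d, q) y + hat d (d, q + d) y) p * pdy (hat (2*d) (2*d, q + 2*d)) p) = 0 := by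
  have hOmgMeas : MeasurableSet Omg := measurableSet_Ioo.prod measurableSet_Ioo
  have hNNnull : volume ({p : ℝ × ℝ | p.1 = 0} ∪ ({p : ℝ × ℝ | p.1 = d} ∪ ({p : ℝ × ℝ | p.1 = 2*d} ∪ ({p : ℝ × ℝ | p.2 = q - d} ∪ ({p : ℝ × ℝ | p.2 = q} ∪ ({p : ℝ × ℝ | p.2 = q + d} ∪ ({p : ℝ × ℝ | p.2 = q + 2*d} ∪ ({p : ℝ × ℝ | p.1 - p.2 = d - q} ∪ ({p : ℝ × ℝ | p.1 - p.2 = -q} ∪ ({p : ℝ × ℝ | p.1 - p.2 = 2*d - q} ∪ ({p : ℝ × ℝ | p.1 - p.2 = -q - d}))))))))))) = 0 :=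
    measure_union_null (null_v 0) (measure_union_null (null_v d) (measure_union_null (null_v (2*d)) (measure_union_null (null_h (q - d)) (measure_union_null (null_h q) (measure_union_null (null_h (q + d)) (measure_union_null (null_h (q + 2*d)) (measure_union_null (null_d (d - q)) (measure_union_null (null_d (-q)) (measure_union_null (null_d (2*d - q)) (null_d (-q - d)))))))))))
  have hd2 : (0:ℝ) < 2*d := by linarith
  have hInt : IntegrableOn (fun p => pdx (fun y => 2 * hat d (d, q) y + hat d (d, q + d) y) p * pdx (hat (2*d) (2*d, q + 2*d)) p + pdy (fun y => 2 * hat d (d, q) y + hat d (d, q + d) y) p * pdy (hat (2*d) (2*d, q + 2*d)) p) Omg :=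
    integrableG (lip_psi hd) (lip_hat hd2 (2*d, q + 2*d))
  have sub1 : tri (d) (2*d) (q) (0) (q-d) (1) ⊆ Omg := by
    intro p hp
    simp only [tri, Set.mem_setOf_eq] at hp
    obtain ⟨m1, m2, m3, m4⟩ := hp
    simp only [Omg, Set.mem_prod, Set.mem_Ioo]
    refine ⟨⟨?_, ?_⟩, ?_, ?_⟩ <;> linarith
  have sub2 : tri (d) (2*d) (q-d) (1) (q+d) (0) ⊆ (Omg \ tri (d) (2*d) (q) (0) (q-d) (1)) := by
    intro p hp
    simp only [tri, Set.mem_setOf_eq] at hp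
    obtain ⟨m1, m2, m3, m4⟩ := hp
    simp only [Set.mem_diff, Omg, Set.mem_prod, Set.mem_Ioo, tri, Set.mem_setOf_eq]
    refine ⟨⟨⟨?_, ?_⟩, ?_, ?_⟩, ?_⟩
    all_goals first
    | linarith
    | (rintro ⟨w1, w2, w3, w4⟩; linarith)
  have sub3 : tri (0) (d) (q) (0) (q) (1) ⊆ ((Omg \ tri (d) (2*d) (q) (0) (q-d) (1)) \ tri (d) (2*d) (q-d) (1) (q+d) (0)) := by
    intro p hp
    simp only [tri, Set.mem_setOf_eq] at hp
    obtain ⟨m1, m2, m3, m4⟩ := hp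
    simp only [Set.mem_diff, Omg, Set.mem_prod, Set.mem_Ioo, tri, Set.mem_setOf_eq]
    refine ⟨⟨⟨⟨?_, ?_⟩, ?_, ?_⟩, ?_⟩, ?_⟩
    all_goals first
    | linarith
    | (rintro ⟨w1, w2, w3, w4⟩; linarith)
  have sub4 : tri (0) (d) (q-d) (1) (q) (0) ⊆ (((Omg \ tri (d) (2*d) (q) (0) (q-d) (1)) \ tri (d) (2*d) (q-d) (1) (q+d) (0)) \ tri (0) (d) (q) (0) (q) (1)) := by
    intro p hp
    simp only [tri, Set.mem_setOf_eq] at hp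
    obtain ⟨m1, m2, m3, m4⟩ := hp
    simp only [Set.mem_diff, Omg, Set.mem_prod, Set.mem_Ioo, tri, Set.mem_setOf_eq]
    refine ⟨⟨⟨⟨⟨?_, ?_⟩, ?_, ?_⟩, ?_⟩, ?_⟩, ?_⟩
    all_goals first
    | linarith
    | (rintro ⟨w1, w2, w3, w4⟩; linarith)
  have sub5 : tri (0) (d) (q-d) (0) (q-d) (1) ⊆ ((((Omg \ tri (d) (2*d) (q) (0) (q-d) (1)) \ tri (d) (2*d) (q-d) (1) (q+d) (0)) \ tri (0) (d) (q) (0) (q) (1)) \ tri (0) (d) (q-d) (1) (q) (0)) := by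
    intro p hp
    simp only [tri, Set.mem_setOf_eq] at hp
    obtain ⟨m1, m2, m3, m4⟩ := hp
    simp only [Set.mem_diff, Omg, Set.mem_prod, Set.mem_Ioo, tri, Set.mem_setOf_eq]
    refine ⟨⟨⟨⟨⟨⟨?_, ?_⟩, ?_, ?_⟩, ?_⟩, ?_⟩, ?_⟩, ?_⟩
    all_goals first
    | linarith
    | (rintro ⟨w1, w2, w3, w4⟩; linarith)
  have sub6 : tri (d) (2*d) (q-2*d) (1) (q) (0) ⊆ (((((Omg \ tri (d) (2*d) (q) (0) (q-d) (1)) \ tri (d) (2*d) (q-d) (1) (q+d) (0)) \ tri (0) (d) (q) (0) (q) (1)) \ tri (0) (d) (q-d) (1) (q) (0)) \ tri (0) (d) (q-d) (0) (q-d) (1)) := by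
    intro p hp
    simp only [tri, Set.mem_setOf_eq] at hp
    obtain ⟨m1, m2, m3, m4⟩ := hp
    simp only [Set.mem_diff, Omg, Set.mem_prod, Set.mem_Ioo, tri, Set.mem_setOf_eq]
    refine ⟨⟨⟨⟨⟨⟨⟨?_, ?_⟩, ?_, ?_⟩, ?_⟩, ?_⟩, ?_⟩, ?_⟩, ?_⟩
    all_goals first
    | linarith
    | (rintro ⟨w1, w2, w3, w4⟩; linarith)
  have sub7 : tri (d) (2*d) (q+d) (0) (q) (1) ⊆ ((((((Omg \ tri (d) (2*d) (q) (0) (q-d) (1)) \ tri (d) (2*d) (q-d) (1) (q+d) (0)) \ tri (0) (d) (q) (0) (q) (1)) \ tri (0) (d) (q-d) (1) (q) (0)) \ tri (0) (d) (q-d) (0) (q-d) (1)) \ tri (d) (2*d) (q-2*d) (1) (q) (0)) := by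
    intro p hp
    simp only [tri, Set.mem_setOf_eq] at hp
    obtain ⟨m1, m2, m3, m4⟩ := hp
    simp only [Set.mem_diff, Omg, Set.mem_prod, Set.mem_Ioo, tri, Set.mem_setOf_eq]
    refine ⟨⟨⟨⟨⟨⟨⟨⟨?_, ?_⟩, ?_, ?_⟩, ?_⟩, ?_⟩, ?_⟩, ?_⟩, ?_⟩, ?_⟩
    all_goals first
    | linarith
    | (rintro ⟨w1, w2, w3, w4⟩; linarith)
  have sub8 : tri (d) (2*d) (q) (1) (q+2*d) (0) ⊆ (((((((Omg \ tri (d) (2*d) (q) (0) (q-d) (1)) \ tri (d) (2*d) (q-d) (1) (q+d) (0)) \ tri (0) (d) (q) (0) (q) (1)) \ tri (0) (d) (q-d) (1) (q) (0)) \ tri (0) (d) (q-d) (0) (q-d) (1)) \ tri (d) (2*d) (q-2*d) (1) (q) (0)) \ tri (d) (2*d) (q+d) (0) (q) (1)) := by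
    intro p hp
    simp only [tri, Set.mem_setOf_eq] at hp
    obtain ⟨m1, m2, m3, m4⟩ := hp
    simp only [Set.mem_diff, Omg, Set.mem_prod, Set.mem_Ioo, tri, Set.mem_setOf_eq]
    refine ⟨⟨⟨⟨⟨⟨⟨⟨⟨?_, ?_⟩, ?_, ?_⟩, ?_⟩, ?_⟩, ?_⟩, ?_⟩, ?_⟩, ?_⟩, ?_⟩
    all_goals first
    | linarith
    | (rintro ⟨w1, w2, w3, w4⟩; linarith)
  have sub9 : tri (0) (d) (q+d) (0) (q+d) (1) ⊆ ((((((((Omg \ tri (d) (2*d) (q) (0) (q-d) (1)) \ tri (d) (2*d) (q-d) (1) (q+d) (0)) \ tri (0) (d) (q) (0) (q) (1)) \ tri (0) (d) (q-d) (1) (q) (0)) \ tri (0) (d) (q-d) (0) (q-d) (1)) \ tri (d) (2*d) (q-2*d) (1) (q) (0)) \ tri (d) (2*d) (q+d) (0) (q) (1)) \ tri (d) (2*d) (q) (1) (q+2*d) (0)) := by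
    intro p hp
    simp only [tri, Set.mem_setOf_eq] at hp
    obtain ⟨m1, m2, m3, m4⟩ := hp
    simp only [Set.mem_diff, Omg, Set.mem_prod, Set.mem_Ioo, tri, Set.mem_setOf_eq]
    refine ⟨⟨⟨⟨⟨⟨⟨⟨⟨⟨?_, ?_⟩, ?_, ?_⟩, ?_⟩, ?_⟩, ?_⟩, ?_⟩, ?_⟩, ?_⟩, ?_⟩, ?_⟩
    all_goals first
    | linarith
    | (rintro ⟨w1, w2, w3, w4⟩; linarith)
  have sub10 : tri (0) (d) (q) (1) (q+d) (0) ⊆ (((((((((Omg \ tri (d) (2*d) (q) (0) (q-d) (1)) \ tri (d) (2*d) (q-d) (1) (q+d) (0)) \ tri (0) (d) (q) (0) (q) (1)) \ tri (0) (d) (q-d) (1) (q) (0)) \ tri (0) (d) (q-d) (0) (q-d) (1)) \ tri (d) (2*d) (q-2*d) (1) (q) (0)) \ tri (d) (2*d) (q+d) (0) (q) (1)) \ tri (d) (2*d) (q) (1) (q+2*d) (0)) \ tri (0) (d) (q+d) (0) (q+d) (1)) := by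
    intro p hp
    simp only [tri, Set.mem_setOf_eq] at hp
    obtain ⟨m1, m2, m3, m4⟩ := hp
    simp only [Set.mem_diff, Omg, Set.mem_prod, Set.mem_Ioo, tri, Set.mem_setOf_eq]
    refine ⟨⟨⟨⟨⟨⟨⟨⟨⟨⟨⟨?_, ?_⟩, ?_, ?_⟩, ?_⟩, ?_⟩, ?_⟩, ?_⟩, ?_⟩, ?_⟩, ?_⟩, ?_⟩, ?_⟩
    all_goals first
    | linarith
    | (rintro ⟨w1, w2, w3, w4⟩; linarith)
  have val1 : ∀ p ∈ tri (d) (2*d) (q) (0) (q-d) (1),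
      pdx (fun y => 2 * hat d (d, q) y + hat d (d, q + d) y) p * pdx (hat (2*d) (2*d, q + 2*d)) p + pdy (fun y => 2 * hat d (d, q) y + hat d (d, q + d) y) p * pdy (hat (2*d) (2*d, q + 2*d)) p = 0 := by
    intro p hp
    obtain ⟨a1, a2⟩ := pd_psi_1 hd hp
    obtain ⟨b1, b2⟩ := pd_phi1_1 hd hp
    rw [a1, a2, b1, b2]
    field_simp
    try ring
  have val2 : ∀ p ∈ tri (d) (2*d) (q-d) (1) (q+d) (0),
      pdx (fun y => 2 * hat d (d, q) y + hat d (d, q + d) y) p * pdx (hat (2*d) (2*d, q + 2*d)) p + pdy (fun y => 2 * hat d (d, q) y + hat d (d, q + d) y) p * pdy (hat (2*d) (2*d, q + 2*d)) p = -(1/(2*d^2)) := by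
    intro p hp
    obtain ⟨a1, a2⟩ := pd_psi_2 hd hp
    obtain ⟨b1, b2⟩ := pd_phi1_2 hd hp
    rw [a1, a2, b1, b2]
    field_simp
    try ring
  have val3 : ∀ p ∈ tri (0) (d) (q) (0) (q) (1),
      pdx (fun y => 2 * hat d (d, q) y + hat d (d, q + d) y) p * pdx (hat (2*d) (2*d, q + 2*d)) p + pdy (fun y => 2 * hat d (d, q) y + hat d (d, q + d) y) p * pdy (hat (2*d) (2*d, q + 2*d)) p = -(1/(2*d^2)) := by
    intro p hp
    obtain ⟨a1, a2⟩ := pd_psi_3 hd hp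
    obtain ⟨b1, b2⟩ := pd_phi1_3 hd hp
    rw [a1, a2, b1, b2]
    field_simp
    try ring
  have val4 : ∀ p ∈ tri (0) (d) (q-d) (1) (q) (0),
      pdx (fun y => 2 * hat d (d, q) y + hat d (d, q + d) y) p * pdx (hat (2*d) (2*d, q + 2*d)) p + pdy (fun y => 2 * hat d (d, q) y + hat d (d, q + d) y) p * pdy (hat (2*d) (2*d, q + 2*d)) p = 0 := by
    intro p hp
    obtain ⟨a1, a2⟩ := pd_psi_4 hd hp
    obtain ⟨b1, b2⟩ := pd_phi1_4 hd hp
    rw [a1, a2, b1, b2]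
    field_simp
    try ring
  have val5 : ∀ p ∈ tri (0) (d) (q-d) (0) (q-d) (1),
      pdx (fun y => 2 * hat d (d, q) y + hat d (d, q + d) y) p * pdx (hat (2*d) (2*d, q + 2*d)) p + pdy (fun y => 2 * hat d (d, q) y + hat d (d, q + d) y) p * pdy (hat (2*d) (2*d, q + 2*d)) p = 0 := by
    intro p hp
    obtain ⟨a1, a2⟩ := pd_psi_5 hd hp
    obtain ⟨b1, b2⟩ := pd_phi1_5 hd hp
    rw [a1, a2, b1, b2]
    field_simp
    try ring
  have val6 : ∀ p ∈ tri (d) (2*d) (q-2*d) (1) (q) (0),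
      pdx (fun y => 2 * hat d (d, q) y + hat d (d, q + d) y) p * pdx (hat (2*d) (2*d, q + 2*d)) p + pdy (fun y => 2 * hat d (d, q) y + hat d (d, q + d) y) p * pdy (hat (2*d) (2*d, q + 2*d)) p = 0 := by
    intro p hp
    obtain ⟨a1, a2⟩ := pd_psi_6 hd hp
    obtain ⟨b1, b2⟩ := pd_phi1_6 hd hp
    rw [a1, a2, b1, b2]
    field_simp
    try ring
  have val7 : ∀ p ∈ tri (d) (2*d) (q+d) (0) (q) (1),
      pdx (fun y => 2 * hat d (d, q) y + hat d (d, q + d) y) p * pdx (hat (2*d) (2*d, q + 2*d)) p + pdy (fun y => 2 * hat d (d, q) y + hat d (d, q + d) y) p * pdy (hat (2*d) (2*d, q + 2*d)) p = 0 := by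
    intro p hp
    obtain ⟨a1, a2⟩ := pd_psi_7 hd hp
    obtain ⟨b1, b2⟩ := pd_phi1_7 hd hp
    rw [a1, a2, b1, b2]
    field_simp
    try ring
  have val8 : ∀ p ∈ tri (d) (2*d) (q) (1) (q+2*d) (0),
      pdx (fun y => 2 * hat d (d, q) y + hat d (d, q + d) y) p * pdx (hat (2*d) (2*d, q + 2*d)) p + pdy (fun y => 2 * hat d (d, q) y + hat d (d, q + d) y) p * pdy (hat (2*d) (2*d, q + 2*d)) p = 0 := by
    intro p hp
    obtain ⟨a1, a2⟩ := pd_psi_8 hd hp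
    obtain ⟨b1, b2⟩ := pd_phi1_8 hd hp
    rw [a1, a2, b1, b2]
    field_simp
    try ring
  have val9 : ∀ p ∈ tri (0) (d) (q+d) (0) (q+d) (1),
      pdx (fun y => 2 * hat d (d, q) y + hat d (d, q + d) y) p * pdx (hat (2*d) (2*d, q + 2*d)) p + pdy (fun y => 2 * hat d (d, q) y + hat d (d, q + d) y) p * pdy (hat (2*d) (2*d, q + 2*d)) p = 1/(2*d^2) := by
    intro p hp
    obtain ⟨a1, a2⟩ := pd_psi_9 hd hp
    obtain ⟨b1, b2⟩ := pd_phi1_9 hd hp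
    rw [a1, a2, b1, b2]
    field_simp
    try ring
  have val10 : ∀ p ∈ tri (0) (d) (q) (1) (q+d) (0),
      pdx (fun y => 2 * hat d (d, q) y + hat d (d, q + d) y) p * pdx (hat (2*d) (2*d, q + 2*d)) p + pdy (fun y => 2 * hat d (d, q) y + hat d (d, q + d) y) p * pdy (hat (2*d) (2*d, q + 2*d)) p = 1/(2*d^2) := by
    intro p hp
    obtain ⟨a1, a2⟩ := pd_psi_10 hd hp
    obtain ⟨b1, b2⟩ := pd_phi1_10 hd hp
    rw [a1, a2, b1, b2]
    field_simp
    try ring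
  have rem : ∫ p in ((((((((((Omg \ tri (d) (2*d) (q) (0) (q-d) (1)) \ tri (d) (2*d) (q-d) (1) (q+d) (0)) \ tri (0) (d) (q) (0) (q) (1)) \ tri (0) (d) (q-d) (1) (q) (0)) \ tri (0) (d) (q-d) (0) (q-d) (1)) \ tri (d) (2*d) (q-2*d) (1) (q) (0)) \ tri (d) (2*d) (q+d) (0) (q) (1)) \ tri (d) (2*d) (q) (1) (q+2*d) (0)) \ tri (0) (d) (q+d) (0) (q+d) (1)) \ tri (0) (d) (q) (1) (q+d) (0)),
      (pdx (fun y => 2 * hat d (d, q) y + hat d (d, q + d) y) p * pdx (hat (2*d) (2*d, q + 2*d)) p + pdy (fun y => 2 * hat d (d, q) y + hat d (d, q + d) y) p * pdy (hat (2*d) (2*d, q + 2*d)) p) = 0 := by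
    refine integral_zero_of_ae_zero hNNnull ((((((((((hOmgMeas.diff (measurableSet_tri (d) (2*d) (q) (0) (q-d) (1))).diff (measurableSet_tri (d) (2*d) (q-d) (1) (q+d) (0))).diff (measurableSet_tri (0) (d) (q) (0) (q) (1))).diff (measurableSet_tri (0) (d) (q-d) (1) (q) (0))).diff (measurableSet_tri (0) (d) (q-d) (0) (q-d) (1))).diff (measurableSet_tri (d) (2*d) (q-2*d) (1) (q) (0))).diff (measurableSet_tri (d) (2*d) (q+d) (0) (q) (1))).diff (measurableSet_tri (d) (2*d) (q) (1) (q+2*d) (0))).diff (measurableSet_tri (0) (d) (q+d) (0) (q+d) (1))).diff (measurableSet_tri (0) (d) (q) (1) (q+d) (0))) ?_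
    intro p hpS hpN
    simp only [Set.mem_union, Set.mem_setOf_eq, not_or] at hpN
    obtain ⟨n1, n2, n3, n4, n5, n6, n7, n8, n9, n10, n11⟩ := hpN
    simp only [Set.mem_diff] at hpS
    obtain ⟨⟨⟨⟨⟨⟨⟨⟨⟨⟨hOmgp, t1⟩, t2⟩, t3⟩, t4⟩, t5⟩, t6⟩, t7⟩, t8⟩, t9⟩, t10⟩ := hpS
    obtain ⟨o1, o2⟩ := psi_out_full hd n1 n2 n3 n4 n5 n6 n7 n8 n9 n10 n11 t1 t2 t3 t4 t5 t6 t7 t8 t9 t10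
    rw [o1, o2]; ring
  rw [peel hInt (measurableSet_tri (d) (2*d) (q) (0) (q-d) (1)) sub1 val1 (vol_T1 hd) (by positivity)]
  rw [peel (hInt.mono_set Set.diff_subset) (measurableSet_tri (d) (2*d) (q-d) (1) (q+d) (0)) sub2 val2 (vol_T2 hd) (by positivity)]
  rw [peel (hInt.mono_set (Set.diff_subset.trans Set.diff_subset)) (measurableSet_tri (0) (d) (q) (0) (q) (1)) sub3 val3 (vol_T3 hd) (by positivity)]
  rw [peel (hInt.mono_set (Set.diff_subset.trans (Set.diff_subset.trans Set.diff_subset))) (measurableSet_tri (0) (d) (q-d) (1) (q) (0)) sub4 val4 (vol_T4 hd) (by positivity)]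
  rw [peel (hInt.mono_set (Set.diff_subset.trans (Set.diff_subset.trans (Set.diff_subset.trans Set.diff_subset)))) (measurableSet_tri (0) (d) (q-d) (0) (q-d) (1)) sub5 val5 (vol_T5 hd) (by positivity)]
  rw [peel (hInt.mono_set (Set.diff_subset.trans (Set.diff_subset.trans (Set.diff_subset.trans (Set.diff_subset.trans Set.diff_subset))))) (measurableSet_tri (d) (2*d) (q-2*d) (1) (q) (0)) sub6 val6 (vol_T6 hd) (by positivity)]
  rw [peel (hInt.mono_set (Set.diff_subset.trans (Set.diff_subset.trans (Set.diff_subset.trans (Set.diff_subset.trans (Set.diff_subset.trans Set.diff_subset)))))) (measurableSet_tri (d) (2*d) (q+d) (0) (q) (1)) sub7 val7 (vol_T7 hd) (by positivity)]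
  rw [peel (hInt.mono_set (Set.diff_subset.trans (Set.diff_subset.trans (Set.diff_subset.trans (Set.diff_subset.trans (Set.diff_subset.trans (Set.diff_subset.trans Set.diff_subset))))))) (measurableSet_tri (d) (2*d) (q) (1) (q+2*d) (0)) sub8 val8 (vol_T8 hd) (by positivity)]
  rw [peel (hInt.mono_set (Set.diff_subset.trans (Set.diff_subset.trans (Set.diff_subset.trans (Set.diff_subset.trans (Set.diff_subset.trans (Set.diff_subset.trans (Set.diff_subset.trans Set.diff_subset)))))))) (measurableSet_tri (0) (d) (q+d) (0) (q+d) (1)) sub9 val9 (vol_T9 hd) (by positivity)]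
  rw [peel (hInt.mono_set (Set.diff_subset.trans (Set.diff_subset.trans (Set.diff_subset.trans (Set.diff_subset.trans (Set.diff_subset.trans (Set.diff_subset.trans (Set.diff_subset.trans (Set.diff_subset.trans Set.diff_subset))))))))) (measurableSet_tri (0) (d) (q) (1) (q+d) (0)) sub10 val10 (vol_T10 hd) (by positivity)]
  rw [rem]
  field_simp
  try ring

end Stmt10Aux

open Stmt10Aux

set_option maxHeartbeats 1000000

/-- The boundary wavelet ψ¹ = 2φ^{j+1}_{(1,2k)} + φ^{j+1}_{(1,2k+1)} next to the
left boundary of Ω is Dirichlet-orthogonal to all coarse hat functions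
φʲ_{(m,n)} ∈ V_j, 1 ≤ m,n ≤ 2ʲ−1. -/
theorem stmt10 (j k m n : ℕ) (hj : 1 ≤ j) (hk1 : 1 ≤ k)
    (hk2 : 2 * k + 1 ≤ 2 ^ (j + 1) - 1)
    (hm1 : 1 ≤ m) (hm2 : m ≤ 2 ^ j - 1) (hn1 : 1 ≤ n) (hn2 : n ≤ 2 ^ j - 1) :
    dirInner (fun x => 2 * hatL (j + 1) 1 (2 * k) x + hatL (j + 1) 1 (2 * k + 1) x)
      (hatL j m n) = 0 := by
  obtain ⟨d, hd_def⟩ : ∃ d' : ℝ, d' = ((2:ℝ)^(j+1))⁻¹ := ⟨_, rfl⟩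
  have hd : 0 < d := by rw [hd_def]; positivity
  obtain ⟨q, hq_def⟩ : ∃ q' : ℝ, q' = 2*(k:ℝ)*d := ⟨_, rfl⟩
  have hpow : ((2:ℝ)^(j+1)) * d = 1 := by rw [hd_def]; exact mul_inv_cancel₀ (by positivity)
  have h2d : ((2:ℝ)^j)⁻¹ = 2*d := by
    have hp : ((2:ℝ)^(j+1)) = 2^j * 2 := pow_succ 2 j
    rw [hd_def, hp, mul_inv]
    ring
  have hK1 : (1:ℝ) ≤ (k:ℝ) := by exact_mod_cast hk1
  have hq1 : 2*d ≤ q := by rw [hq_def]; nlinarith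
  have h2pow : (2*k+2 : ℕ) ≤ 2^(j+1) := by
    have h2 : (2:ℕ) ≤ 2^(j+1) := by
      calc (2:ℕ) = 2^1 := rfl
        _ ≤ 2^(j+1) := Nat.pow_le_pow_right (by norm_num) (by omega)
    omega
  have hcast : (2*(k:ℝ)+2) ≤ (2:ℝ)^(j+1) := by exact_mod_cast h2pow
  have hq2 : q + 2*d ≤ 1 := by
    have h := mul_le_mul_of_nonneg_right hcast hd.le
    rw [hpow] at h
    have hexp : (2*(k:ℝ)+2)*d = 2*(k:ℝ)*d + 2*d := by ring
    rw [hexp] at h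
    rw [hq_def]
    linarith
  have eA : hatL (j+1) 1 (2*k) = hat d (d, q) := by
    have e1 : ((1:ℕ):ℝ)/2^(j+1) = d := by rw [hd_def]; push_cast; rw [one_div]
    have e2 : ((2*k:ℕ):ℝ)/2^(j+1) = q := by rw [hq_def, hd_def]; push_cast; ring
    unfold hatL
    rw [e1, e2, ← hd_def]
  have eB : hatL (j+1) 1 (2*k+1) = hat d (d, q + d) := by
    have e1 : ((1:ℕ):ℝ)/2^(j+1) = d := by rw [hd_def]; push_cast; rw [one_div]
    have e2 : ((2*k+1:ℕ):ℝ)/2^(j+1) = q + d := by rw [hq_def, hd_def]; push_cast; ring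
    unfold hatL
    rw [e1, e2, ← hd_def]
  have hOmgMeas : MeasurableSet Omg := measurableSet_Ioo.prod measurableSet_Ioo
  have hNNnull : volume ({p : ℝ × ℝ | p.1 = 0} ∪ ({p : ℝ × ℝ | p.1 = d} ∪ ({p : ℝ × ℝ | p.1 = 2*d} ∪ ({p : ℝ × ℝ | p.2 = q - d} ∪ ({p : ℝ × ℝ | p.2 = q} ∪ ({p : ℝ × ℝ | p.2 = q + d} ∪ ({p : ℝ × ℝ | p.2 = q + 2*d} ∪ ({p : ℝ × ℝ | p.1 - p.2 = d - q} ∪ ({p : ℝ × ℝ | p.1 - p.2 = -q} ∪ ({p : ℝ × ℝ | p.1 - p.2 = 2*d - q} ∪ ({p : ℝ × ℝ | p.1 - p.2 = -q - d}))))))))))) = 0 :=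
    measure_union_null (null_v 0) (measure_union_null (null_v d) (measure_union_null (null_v (2*d)) (measure_union_null (null_h (q - d)) (measure_union_null (null_h q) (measure_union_null (null_h (q + d)) (measure_union_null (null_h (q + 2*d)) (measure_union_null (null_d (d - q)) (measure_union_null (null_d (-q)) (measure_union_null (null_d (2*d - q)) (null_d (-q - d)))))))))))
  have far : (2 ≤ (m:ℝ) ∨ ((n:ℝ) ≤ (k:ℝ)-1 ∧ (m:ℝ) = 1) ∨ (k:ℝ)+2 ≤ (n:ℝ)) →
      dirInner (fun x => 2 * hatL (j + 1) 1 (2 * k) x + hatL (j + 1) 1 (2 * k + 1) x)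
        (hatL j m n) = 0 := by
    intro hfar
    have eC : hatL j m n = hat (2*d) (2*d*(m:ℝ), 2*d*(n:ℝ)) := by
      have e1 : ((m:ℕ):ℝ)/2^j = 2*d*(m:ℝ) := by rw [div_eq_mul_inv, h2d]; ring
      have e2 : ((n:ℕ):ℝ)/2^j = 2*d*(n:ℝ) := by rw [div_eq_mul_inv, h2d]; ring
      unfold hatL
      rw [h2d, e1, e2]
    unfold dirInner
    rw [eA, eB, eC]
    refine integral_zero_of_ae_zero hNNnull hOmgMeas ?_
    intro p hpOmg hpN
    simp only [Set.mem_union, Set.mem_setOf_eq, not_or] at hpN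
    obtain ⟨n1, n2, n3, n4, n5, n6, n7, n8, n9, n10, n11⟩ := hpN
    have hd2 : (0:ℝ) < 2*d := by linarith
    rcases lt_trichotomy (max |p.1 - d| (max |p.2 - q| |(p.1 - d) - (p.2 - q)|)) d with hA | hA | hA
    · have c1 := abs_lt.1 (lt_of_le_of_lt (le_max_left _ _) hA)
      have c2 := abs_lt.1 (lt_of_le_of_lt ((le_max_left _ _).trans (le_max_right _ _)) hA)
      have c3 := abs_lt.1 (lt_of_le_of_lt ((le_max_right _ _).trans (le_max_right _ _)) hA)
      have hout := far_phi_out hd (by exact_mod_cast hm1) hfar hq_def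
        (by linarith [c1.2]) (by linarith [c2.2]) (by linarith [c3.2])
      obtain ⟨o1, o2⟩ := pd_hat_out hd2 hout
      rw [o1, o2]; ring
    · exact absurd hA (M_ne hd (fun hc => n3 (by linarith)) (fun hc => n1 (by linarith))
        (fun hc => n6 (by linarith)) (fun hc => n4 (by linarith))
        (fun hc => n10 (by linarith)) (fun hc => n9 (by linarith)))
    · rcases lt_trichotomy (max |p.1 - d| (max |p.2 - (q+d)| |(p.1 - d) - (p.2 - (q+d))|)) d
        with hB | hB | hB
      · have c1 := abs_lt.1 (lt_of_le_of_lt (le_max_left _ _) hB)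
        have c2 := abs_lt.1 (lt_of_le_of_lt ((le_max_left _ _).trans (le_max_right _ _)) hB)
        have c3 := abs_lt.1 (lt_of_le_of_lt ((le_max_right _ _).trans (le_max_right _ _)) hB)
        have hout := far_phi_out hd (by exact_mod_cast hm1) hfar hq_def
          (by linarith [c1.2]) (by linarith [c2.2]) (by linarith [c3.2])
        obtain ⟨o1, o2⟩ := pd_hat_out hd2 hout
        rw [o1, o2]; ring
      · exact absurd hB (M_ne hd (fun hc => n3 (by linarith)) (fun hc => n1 (by linarith))
          (fun hc => n7 (by linarith)) (fun hc => n5 (by linarith))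
          (fun hc => n8 (by linarith)) (fun hc => n11 (by linarith)))
      · obtain ⟨o1, o2⟩ := pd_psi_out hd hA hB
        rw [o1, o2]; ring
  rcases Nat.lt_or_ge 1 m with hm | hm
  · exact far (Or.inl (by exact_mod_cast hm))
  · have hmeq : m = 1 := le_antisymm hm hm1
    subst hmeq
    rcases Nat.lt_trichotomy n k with hn | hn | hn
    · refine far (Or.inr (Or.inl ⟨?_, Nat.cast_one⟩))
      have hnk : n + 1 ≤ k := hn
      have : ((n:ℝ)) + 1 ≤ (k:ℝ) := by exact_mod_cast hnk
      linarith
    · subst hn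
      have eC0 : hatL j 1 n = hat (2*d) (2*d, q) := by
        have e1 : ((1:ℕ):ℝ)/2^j = 2*d := by push_cast; rw [one_div, h2d]
        have e2 : ((n:ℕ):ℝ)/2^j = q := by
          rw [div_eq_mul_inv, h2d]
          push_cast
          rw [hq_def]
          ring
        unfold hatL
        rw [h2d, e1, e2]
      unfold dirInner
      rw [eA, eB, eC0]
      exact main0 hd hq1 hq2
    · rcases Nat.lt_or_ge (k+1) n with hn2 | hn2
      · refine far (Or.inr (Or.inr ?_))
        have hnk : k + 2 ≤ n := hn2
        have : ((k:ℝ)) + 2 ≤ (n:ℝ) := by exact_mod_cast hnk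
        linarith
      · have hneq : n = k+1 := le_antisymm hn2 hn
        subst hneq
        have eC0 : hatL j 1 (k+1) = hat (2*d) (2*d, q + 2*d) := by
          have e1 : ((1:ℕ):ℝ)/2^j = 2*d := by push_cast; rw [one_div, h2d]
          have e2 : (((k+1):ℕ):ℝ)/2^j = q + 2*d := by
            rw [div_eq_mul_inv, h2d]
            push_cast
            rw [hq_def]
            ring
          unfold hatL
          rw [h2d, e1, e2]
        unfold dirInner
        rw [eA, eB, eC0]
        exact main1 hd hq1 hq2
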